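/- arXiv:math/0305237 — 7 statements merged into one kernel-verified Lean document; each statement's English description precedes it below -/
import Mathlib

section
/- Let n > 1, let U ⊂ ℝⁿ∖{0} be an open O(n)-invariant set, I = {|x| : x ∈ U}, and let f : I → (0,∞) be of class C². Set ρ(x+iy) = |y|² − f(|x|)² and Σ = {x+iy : x ∈ U, |y| = f(|x|)}. Then L_ρ(p;v) > 0 for every p ∈ Σ and every nonzero v ∈ T_p^ℂΣ (i.e. the domain D₋ = {x+iy : x ∈ U, |y| < f(|x|)} is strongly pseudoconvex along Σ) if and only if for every t ∈ I one has f(t) f'(t)/t < 1 and f(t) ( f''(t) + f'(t)³/t ) < 1. -/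
open Complex Set


/-- The Levi form of a `C²` function `ρ` at `p` in direction `v`:
`4 L_ρ(p;v) = H_p(v,v) + H_p(iv,iv)` where `H_p` is the second real Fréchet derivative. -/
noncomputable def leviForm {E : Type*} [NormedAddCommGroup E] [NormedSpace ℂ E]
    (ρ : E → ℝ) (p v : E) : ℝ :=
  (iteratedFDeriv ℝ 2 ρ p ![v, v]
    + iteratedFDeriv ℝ 2 ρ p ![Complex.I • v, Complex.I • v]) / 4

/-- The complex tangent space `T_p^ℂΣ = {v : dρ_p(v) = 0 and dρ_p(iv) = 0}`. -/
def complexTangent {E : Type*} [NormedAddCommGroup E] [NormedSpace ℂ E]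
    (ρ : E → ℝ) (p : E) : Set E :=
  {v | fderiv ℝ ρ p v = 0 ∧ fderiv ℝ ρ p (Complex.I • v) = 0}

/-- `ρ(x+iy) = |y|² - f(|x|)²`. -/
noncomputable def rhoF (n : ℕ) (f : ℝ → ℝ) : (Fin n → ℂ) → ℝ :=
  fun z => (∑ j, (z j).im ^ 2) - (f (Real.sqrt (∑ j, (z j).re ^ 2))) ^ 2

/-- The hypersurface `Σ = {x+iy : x ∈ U, |y| = f(|x|)}`. -/
def SigmaSetF (n : ℕ) (U : Set (Fin n → ℝ)) (f : ℝ → ℝ) : Set (Fin n → ℂ) :=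
  {z | (fun j => (z j).re) ∈ U ∧
    Real.sqrt (∑ j, (z j).im ^ 2) = f (Real.sqrt (∑ j, (z j).re ^ 2))}

section aux
variable {n : ℕ}

noncomputable def reL (n : ℕ) (j : Fin n) : (Fin n → ℂ) →L[ℝ] ℝ :=
  Complex.reCLM.comp (ContinuousLinearMap.proj j)
noncomputable def imL (n : ℕ) (j : Fin n) : (Fin n → ℂ) →L[ℝ] ℝ :=
  Complex.imCLM.comp (ContinuousLinearMap.proj j)

@[simp] lemma reL_apply (j : Fin n) (z : Fin n → ℂ) : reL n j z = (z j).re := rfl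
@[simp] lemma imL_apply (j : Fin n) (z : Fin n → ℂ) : imL n j z = (z j).im := rfl

noncomputable def bilinRe (n : ℕ) : (Fin n → ℂ) →L[ℝ] ((Fin n → ℂ) →L[ℝ] ℝ) :=
  ∑ j, (((2:ℝ) • reL n j).smulRight (reL n j))
noncomputable def bilinIm (n : ℕ) : (Fin n → ℂ) →L[ℝ] ((Fin n → ℂ) →L[ℝ] ℝ) :=
  ∑ j, (((2:ℝ) • imL n j).smulRight (imL n j))

@[simp] lemma bilinRe_apply (z w : Fin n → ℂ) :
    bilinRe n z w = ∑ j, 2 * (z j).re * (w j).re := by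
  simp [bilinRe, ContinuousLinearMap.sum_apply, mul_assoc]

@[simp] lemma bilinIm_apply (z w : Fin n → ℂ) :
    bilinIm n z w = ∑ j, 2 * (z j).im * (w j).im := by
  simp [bilinIm, ContinuousLinearMap.sum_apply, mul_assoc]

noncomputable def gF (f : ℝ → ℝ) (t : ℝ) : ℝ := f (Real.sqrt t) ^ 2
noncomputable def g1F (f : ℝ → ℝ) (t : ℝ) : ℝ :=
  f (Real.sqrt t) * deriv f (Real.sqrt t) / Real.sqrt t
noncomputable def g2F (f : ℝ → ℝ) (t : ℝ) : ℝ :=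
  ((deriv f (Real.sqrt t))^2 + f (Real.sqrt t) * deriv (deriv f) (Real.sqrt t)
    - f (Real.sqrt t) * deriv f (Real.sqrt t) / Real.sqrt t) / (2 * t)

lemma hasDerivAt_gF {f : ℝ → ℝ} {V : Set ℝ} (hV : IsOpen V) (hf : ContDiffOn ℝ 2 f V)
    {t : ℝ} (ht : 0 < t) (htV : Real.sqrt t ∈ V) : HasDerivAt (gF f) (g1F f t) t := by
  have hr : Real.sqrt t ≠ 0 := by positivity
  have hfd : HasDerivAt f (deriv f (Real.sqrt t)) (Real.sqrt t) :=
    (((hf.contDiffAt (hV.mem_nhds htV)).differentiableAt (by norm_num))).hasDerivAt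
  have hs : HasDerivAt Real.sqrt (1 / (2 * Real.sqrt t)) t := Real.hasDerivAt_sqrt ht.ne'
  have h1 : HasDerivAt (fun u => f (Real.sqrt u))
      (deriv f (Real.sqrt t) * (1 / (2 * Real.sqrt t))) t := hfd.comp t hs
  have h2 := h1.pow 2
  convert (show HasDerivAt (gF f) (((2:ℕ):ℝ) * f (Real.sqrt t) ^ (2 - 1)
    * (deriv f (Real.sqrt t) * (1 / (2 * Real.sqrt t)))) t from h2) using 1
  simp only [g1F]
  field_simp
  ring

lemma hasDerivAt_g1F {f : ℝ → ℝ} {V : Set ℝ} (hV : IsOpen V) (hf : ContDiffOn ℝ 2 f V)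
    {t : ℝ} (ht : 0 < t) (htV : Real.sqrt t ∈ V) : HasDerivAt (g1F f) (g2F f t) t := by
  have hr : Real.sqrt t ≠ 0 := by positivity
  have hdf : ContDiffOn ℝ 1 (deriv f) V := hf.deriv_of_isOpen hV (by norm_num)
  have hfd : HasDerivAt f (deriv f (Real.sqrt t)) (Real.sqrt t) :=
    (((hf.contDiffAt (hV.mem_nhds htV)).differentiableAt (by norm_num))).hasDerivAt
  have hfd2 : HasDerivAt (deriv f) (deriv (deriv f) (Real.sqrt t)) (Real.sqrt t) :=
    ((hdf.contDiffAt (hV.mem_nhds htV)).differentiableAt (by norm_num)).hasDerivAt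
  have hs : HasDerivAt Real.sqrt (1 / (2 * Real.sqrt t)) t := Real.hasDerivAt_sqrt ht.ne'
  have hmul : HasDerivAt (fun r => f r * deriv f r)
      (deriv f (Real.sqrt t) * deriv f (Real.sqrt t)
        + f (Real.sqrt t) * deriv (deriv f) (Real.sqrt t)) (Real.sqrt t) := hfd.mul hfd2
  have hdiv := hmul.div (hasDerivAt_id (Real.sqrt t)) hr
  have h1 := hdiv.comp t hs
  convert (show HasDerivAt (g1F f) (((deriv f (Real.sqrt t) * deriv f (Real.sqrt t)
        + f (Real.sqrt t) * deriv (deriv f) (Real.sqrt t)) * id (Real.sqrt t)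
        - f (Real.sqrt t) * deriv f (Real.sqrt t) * 1) / id (Real.sqrt t) ^ 2
        * (1 / (2 * Real.sqrt t))) t from h1) using 1
  simp only [id_eq]
  rw [g2F, show t = Real.sqrt t ^ 2 from (Real.sq_sqrt ht.le).symm]
  field_simp
  rw [Real.sqrt_sq (Real.sqrt_nonneg t)]

lemma hasFDerivAt_sumsq_re (z : Fin n → ℂ) :
    HasFDerivAt (fun z : Fin n → ℂ => ∑ j, (z j).re ^ 2) (bilinRe n z) z := by
  have h := HasFDerivAt.sum (u := Finset.univ)
    (fun j _ => ((reL n j).hasFDerivAt (x := z)).mul ((reL n j).hasFDerivAt (x := z)))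
  have hfun : (fun y : Fin n → ℂ => ∑ j, reL n j y * reL n j y)
      = fun y : Fin n → ℂ => ∑ j, (y j).re ^ 2 := by
    funext y; exact Finset.sum_congr rfl fun j _ => by simp [pow_two]
  have hder : (∑ j : Fin n, (reL n j z • reL n j + reL n j z • reL n j)) = bilinRe n z := by
    rw [bilinRe, ContinuousLinearMap.sum_apply]
    refine Finset.sum_congr rfl fun j _ => ?_
    ext w
    simp [two_mul, mul_assoc]
    ring
  rw [← hfun, ← hder]
  have e : (∑ i, ⇑(reL n i) * ⇑(reL n i)) = fun y => ∑ j, reL n j y * reL n j y := by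
    funext y; simp only [Finset.sum_apply, Pi.mul_apply]
  rw [e] at h; exact h

lemma hasFDerivAt_sumsq_im (z : Fin n → ℂ) :
    HasFDerivAt (fun z : Fin n → ℂ => ∑ j, (z j).im ^ 2) (bilinIm n z) z := by
  have h := HasFDerivAt.sum (u := Finset.univ)
    (fun j _ => ((imL n j).hasFDerivAt (x := z)).mul ((imL n j).hasFDerivAt (x := z)))
  have hfun : (fun y : Fin n → ℂ => ∑ j, imL n j y * imL n j y)
      = fun y : Fin n → ℂ => ∑ j, (y j).im ^ 2 := by
    funext y; exact Finset.sum_congr rfl fun j _ => by simp [pow_two]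
  have hder : (∑ j : Fin n, (imL n j z • imL n j + imL n j z • imL n j)) = bilinIm n z := by
    rw [bilinIm, ContinuousLinearMap.sum_apply]
    refine Finset.sum_congr rfl fun j _ => ?_
    ext w
    simp [two_mul, mul_assoc]
    ring
  rw [← hfun, ← hder]
  have e : (∑ i, ⇑(imL n i) * ⇑(imL n i)) = fun y => ∑ j, imL n j y * imL n j y := by
    funext y; simp only [Finset.sum_apply, Pi.mul_apply]
  rw [e] at h; exact h


noncomputable def DF (f : ℝ → ℝ) (n : ℕ) (z : Fin n → ℂ) : (Fin n → ℂ) →L[ℝ] ℝ :=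
  bilinIm n z - g1F f (∑ j, (z j).re ^ 2) • bilinRe n z

lemma hasFDerivAt_rhoF {f : ℝ → ℝ} {V : Set ℝ} (hV : IsOpen V) (hf : ContDiffOn ℝ 2 f V)
    {z : Fin n → ℂ} (hz : 0 < ∑ j, (z j).re ^ 2) (hzV : Real.sqrt (∑ j, (z j).re ^ 2) ∈ V) :
    HasFDerivAt (rhoF n f) (DF f n z) z := by
  have h1 := hasFDerivAt_sumsq_im z
  have hq := hasFDerivAt_sumsq_re z
  have hg := hasDerivAt_gF hV hf hz hzV
  have h2 := hg.comp_hasFDerivAt z hq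
  have := h1.sub h2
  convert this using 1 <;> rfl

noncomputable def D2F (f : ℝ → ℝ) (n : ℕ) (p : Fin n → ℂ) :
    (Fin n → ℂ) →L[ℝ] ((Fin n → ℂ) →L[ℝ] ℝ) :=
  bilinIm n - (g1F f (∑ j, (p j).re ^ 2) • bilinRe n
    + ((g2F f (∑ j, (p j).re ^ 2)) • (bilinRe n p)).smulRight (bilinRe n p))

lemma hasFDerivAt_DF {f : ℝ → ℝ} {V : Set ℝ} (hV : IsOpen V) (hf : ContDiffOn ℝ 2 f V)
    {p : Fin n → ℂ} (hp : 0 < ∑ j, (p j).re ^ 2) (hpV : Real.sqrt (∑ j, (p j).re ^ 2) ∈ V) :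
    HasFDerivAt (fun z => DF f n z) (D2F f n p) p := by
  have h1 : HasFDerivAt (fun z : Fin n → ℂ => bilinIm n z) (bilinIm n) p :=
    (bilinIm n).hasFDerivAt
  have hq := hasFDerivAt_sumsq_re p
  have hg := hasDerivAt_g1F hV hf hp hpV
  have hc : HasFDerivAt (fun z : Fin n → ℂ => g1F f (∑ j, (z j).re ^ 2))
      (g2F f (∑ j, (p j).re ^ 2) • bilinRe n p) p := by
      have := hg.comp_hasFDerivAt p hq; exact this
  have h2 := hc.smul ((bilinRe n).hasFDerivAt (x := p))
  exact h1.sub h2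

lemma fderiv_rhoF_eq {f : ℝ → ℝ} {V : Set ℝ} (hV : IsOpen V) (hf : ContDiffOn ℝ 2 f V)
    {p : Fin n → ℂ} (hp : 0 < ∑ j, (p j).re ^ 2) (hpV : Real.sqrt (∑ j, (p j).re ^ 2) ∈ V) :
    fderiv ℝ (rhoF n f) p = DF f n p :=
  (hasFDerivAt_rhoF hV hf hp hpV).fderiv

lemma fderiv_fderiv_rhoF_eq {f : ℝ → ℝ} {V : Set ℝ} (hV : IsOpen V) (hf : ContDiffOn ℝ 2 f V)
    {p : Fin n → ℂ} (hp : 0 < ∑ j, (p j).re ^ 2) (hpV : Real.sqrt (∑ j, (p j).re ^ 2) ∈ V) :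
    fderiv ℝ (fderiv ℝ (rhoF n f)) p = D2F f n p := by
  have hcont : Continuous (fun z : Fin n → ℂ => ∑ j, (z j).re ^ 2) := by
    continuity
  have hWopen : IsOpen {z : Fin n → ℂ | 0 < ∑ j, (z j).re ^ 2 ∧
      Real.sqrt (∑ j, (z j).re ^ 2) ∈ V} := by
    have h1 : IsOpen {t : ℝ | 0 < t ∧ Real.sqrt t ∈ V} :=
      (isOpen_Ioi.inter (hV.preimage Real.continuous_sqrt))
    exact h1.preimage hcont
  have hev : fderiv ℝ (rhoF n f) =ᶠ[nhds p] (fun z => DF f n z) := by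
    filter_upwards [hWopen.mem_nhds ⟨hp, hpV⟩] with z hz
    exact (hasFDerivAt_rhoF hV hf hz.1 hz.2).fderiv
  rw [hev.fderiv_eq]
  exact (hasFDerivAt_DF hV hf hp hpV).fderiv

lemma sum_two_mul {n : ℕ} (c d : Fin n → ℝ) :
    ∑ j, 2 * c j * d j = 2 * ∑ j, c j * d j := by
  rw [Finset.mul_sum]; exact Finset.sum_congr rfl fun j _ => by ring

lemma sum_two_sq {n : ℕ} (c : Fin n → ℝ) :
    ∑ j, 2 * c j * c j = 2 * ∑ j, c j ^ 2 := by
  rw [Finset.mul_sum]; exact Finset.sum_congr rfl fun j _ => by ring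

lemma D2F_apply {n : ℕ} (f : ℝ → ℝ) (p u : Fin n → ℂ) :
    D2F f n p u u =
      2 * (∑ j, (u j).im ^ 2)
        - (g1F f (∑ j, (p j).re ^ 2) * (2 * ∑ j, (u j).re ^ 2)
          + g2F f (∑ j, (p j).re ^ 2) * (2 * ∑ j, (p j).re * (u j).re)
              * (2 * ∑ j, (p j).re * (u j).re)) := by
  simp only [D2F, ContinuousLinearMap.sub_apply, ContinuousLinearMap.add_apply,
    ContinuousLinearMap.smul_apply, ContinuousLinearMap.smulRight_apply,
    bilinRe_apply, bilinIm_apply, smul_eq_mul]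
  rw [sum_two_sq (fun j => (u j).im), sum_two_sq (fun j => (u j).re),
    sum_two_mul (fun j => (p j).re) (fun j => (u j).re)]

lemma smul_I_re {n : ℕ} (v : Fin n → ℂ) (j : Fin n) :
    ((Complex.I • v) j).re = -(v j).im := by
  simp [Pi.smul_apply, smul_eq_mul, Complex.mul_re]

lemma smul_I_im {n : ℕ} (v : Fin n → ℂ) (j : Fin n) :
    ((Complex.I • v) j).im = (v j).re := by
  simp [Pi.smul_apply, smul_eq_mul, Complex.mul_im]

lemma leviForm_rhoF_eq {f : ℝ → ℝ} {V : Set ℝ} (hV : IsOpen V) (hf : ContDiffOn ℝ 2 f V)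
    {p : Fin n → ℂ} (hp : 0 < ∑ j, (p j).re ^ 2) (hpV : Real.sqrt (∑ j, (p j).re ^ 2) ∈ V)
    (v : Fin n → ℂ) :
    leviForm (rhoF n f) p v =
      ((1 - g1F f (∑ j, (p j).re ^ 2)) * ((∑ j, (v j).re ^ 2) + (∑ j, (v j).im ^ 2))
        - 2 * g2F f (∑ j, (p j).re ^ 2)
            * ((∑ j, (p j).re * (v j).re) ^ 2 + (∑ j, (p j).re * (v j).im) ^ 2)) / 2 := by
  have hD2 := fderiv_fderiv_rhoF_eq hV hf hp hpV
  rw [leviForm, iteratedFDeriv_two_apply, iteratedFDeriv_two_apply]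
  simp only [Matrix.cons_val_zero, Matrix.cons_val_one, Matrix.head_cons, hD2]
  rw [D2F_apply, D2F_apply]
  have h1 : (∑ j, ((Complex.I • v) j).re ^ 2) = ∑ j, (v j).im ^ 2 :=
    Finset.sum_congr rfl fun j _ => by rw [smul_I_re]; ring
  have h2 : (∑ j, ((Complex.I • v) j).im ^ 2) = ∑ j, (v j).re ^ 2 :=
    Finset.sum_congr rfl fun j _ => by rw [smul_I_im]
  have h3 : (∑ j, (p j).re * ((Complex.I • v) j).re) = -∑ j, (p j).re * (v j).im := by
    rw [← Finset.sum_neg_distrib]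
    exact Finset.sum_congr rfl fun j _ => by rw [smul_I_re]; ring
  rw [h1, h2, h3]
  ring

lemma fderiv_rhoF_apply {f : ℝ → ℝ} {V : Set ℝ} (hV : IsOpen V) (hf : ContDiffOn ℝ 2 f V)
    {p : Fin n → ℂ} (hp : 0 < ∑ j, (p j).re ^ 2) (hpV : Real.sqrt (∑ j, (p j).re ^ 2) ∈ V)
    (v : Fin n → ℂ) :
    fderiv ℝ (rhoF n f) p v =
      2 * (∑ j, (p j).im * (v j).im)
        - g1F f (∑ j, (p j).re ^ 2) * (2 * ∑ j, (p j).re * (v j).re) := by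
  rw [fderiv_rhoF_eq hV hf hp hpV]
  simp only [DF, ContinuousLinearMap.sub_apply, ContinuousLinearMap.smul_apply,
    bilinRe_apply, bilinIm_apply, smul_eq_mul]
  rw [sum_two_mul, sum_two_mul]

lemma gram_ineq {n : ℕ} (x y a : Fin n → ℝ) :
    (∑ j, y j ^ 2) * (∑ j, x j * a j) ^ 2 + (∑ j, x j ^ 2) * (∑ j, y j * a j) ^ 2
      - 2 * (∑ j, x j * y j) * (∑ j, x j * a j) * (∑ j, y j * a j)
    ≤ ((∑ j, x j ^ 2) * (∑ j, y j ^ 2) - (∑ j, x j * y j) ^ 2) * (∑ j, a j ^ 2) := by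
  set R := ∑ j, x j ^ 2 with hR
  set F := ∑ j, y j ^ 2 with hF
  set C := ∑ j, x j * y j with hC
  set S := ∑ j, x j * a j with hS
  set T := ∑ j, y j * a j with hT
  have hR0 : 0 ≤ R := Finset.sum_nonneg fun j _ => sq_nonneg _
  rcases eq_or_lt_of_le hR0 with hR0' | hR0'
  · -- R = 0 : all x j = 0
    have hx : ∀ j, x j = 0 := by
      intro j
      have := (Finset.sum_eq_zero_iff_of_nonneg (fun j _ => sq_nonneg (x j))).1 hR0'.symm
      exact pow_eq_zero_iff (two_ne_zero) |>.1 (this j (Finset.mem_univ j))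
    have hS0 : S = 0 := by rw [hS]; exact Finset.sum_eq_zero fun j _ => by rw [hx j, zero_mul]
    have hC0 : C = 0 := by rw [hC]; exact Finset.sum_eq_zero fun j _ => by rw [hx j, zero_mul]
    rw [hS0, hC0, ← hR0']
    ring_nf
    simp
  · -- R > 0
    have hCS := Finset.sum_mul_sq_le_sq_mul_sq Finset.univ
      (fun j => R * y j - C * x j) (fun j => R * a j - S * x j)
    have e1 : (∑ j, (R * y j - C * x j) * (R * a j - S * x j)) = R * (R * T - S * C) := by
      have : ∀ j ∈ Finset.univ, (R * y j - C * x j) * (R * a j - S * x j)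
          = R * R * (y j * a j) - R * S * (x j * y j) - C * R * (x j * a j)
            + C * S * (x j ^ 2) := fun j _ => by ring
      rw [Finset.sum_congr rfl this]
      simp only [Finset.sum_add_distrib, Finset.sum_sub_distrib, ← Finset.mul_sum]
      rw [← hR, ← hC, ← hS, ← hT]; ring
    have e2 : (∑ j, (R * y j - C * x j) ^ 2) = R * (R * F - C ^ 2) := by
      have : ∀ j ∈ Finset.univ, (R * y j - C * x j) ^ 2
          = R * R * (y j ^ 2) - 2 * R * C * (x j * y j) + C * C * (x j ^ 2) := fun j _ => by
        ring
      rw [Finset.sum_congr rfl this]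
      simp only [Finset.sum_add_distrib, Finset.sum_sub_distrib, ← Finset.mul_sum]
      rw [← hR, ← hC, ← hF]; ring
    have e3 : (∑ j, (R * a j - S * x j) ^ 2) = R * (R * (∑ j, a j ^ 2) - S ^ 2) := by
      have : ∀ j ∈ Finset.univ, (R * a j - S * x j) ^ 2
          = R * R * (a j ^ 2) - 2 * R * S * (x j * a j) + S * S * (x j ^ 2) := fun j _ => by
        ring
      rw [Finset.sum_congr rfl this]
      simp only [Finset.sum_add_distrib, Finset.sum_sub_distrib, ← Finset.mul_sum]
      rw [← hR, ← hS]; ring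
    rw [e1, e2, e3] at hCS
    have h1 : (R * T - S * C) ^ 2 ≤ (R * F - C ^ 2) * (R * (∑ j, a j ^ 2) - S ^ 2) := by
      nlinarith [hCS, mul_pos hR0' hR0']
    have h2 : R * (F * S ^ 2 + R * T ^ 2 - 2 * C * S * T)
        ≤ R * ((R * F - C ^ 2) * (∑ j, a j ^ 2)) := by nlinarith [h1]
    exact (mul_le_mul_iff_right₀ hR0').mp h2

lemma fderiv_rhoF_apply_I {f : ℝ → ℝ} {V : Set ℝ} (hV : IsOpen V) (hf : ContDiffOn ℝ 2 f V)
    {p : Fin n → ℂ} (hp : 0 < ∑ j, (p j).re ^ 2) (hpV : Real.sqrt (∑ j, (p j).re ^ 2) ∈ V)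
    (v : Fin n → ℂ) :
    fderiv ℝ (rhoF n f) p (Complex.I • v) =
      2 * (∑ j, (p j).im * (v j).re)
        + g1F f (∑ j, (p j).re ^ 2) * (2 * ∑ j, (p j).re * (v j).im) := by
  rw [fderiv_rhoF_apply hV hf hp hpV]
  have h1 : ∑ j, (p j).im * ((Complex.I • v) j).im = ∑ j, (p j).im * (v j).re :=
    Finset.sum_congr rfl fun j _ => by rw [smul_I_im]
  have h2 : ∑ j, (p j).re * ((Complex.I • v) j).re = -∑ j, (p j).re * (v j).im := by
    rw [← Finset.sum_neg_distrib]
    exact Finset.sum_congr rfl fun j _ => by rw [smul_I_re]; ring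
  rw [h1, h2]; ring

def mkz {n : ℕ} (a b : Fin n → ℝ) : Fin n → ℂ := fun j => ⟨a j, b j⟩
@[simp] lemma mkz_re {n : ℕ} (a b : Fin n → ℝ) (j : Fin n) : (mkz a b j).re = a j := rfl
@[simp] lemma mkz_im {n : ℕ} (a b : Fin n → ℝ) (j : Fin n) : (mkz a b j).im = b j := rfl

lemma sum_single_sq {n : ℕ} (i : Fin n) (c : ℝ) :
    ∑ j, (Pi.single i c : Fin n → ℝ) j ^ 2 = c ^ 2 := by
  simp [Pi.single_apply, sq, ite_mul, Finset.sum_ite_eq']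

lemma sum_mul_single {n : ℕ} (w : Fin n → ℝ) (i : Fin n) (c : ℝ) :
    ∑ j, w j * (Pi.single i c : Fin n → ℝ) j = w i * c := by
  simp [Pi.single_apply, mul_ite, Finset.sum_ite_eq']

lemma key_ineq (F r C D1 Sa Sb Pa Pb Ya Yb : ℝ) (hF : 0 < F) (hr : 0 < r)
    (ga : F ^ 2 * Pa ^ 2 + r ^ 2 * Ya ^ 2 - 2 * C * Pa * Ya ≤ (r ^ 2 * F ^ 2 - C ^ 2) * Sa)
    (gb : F ^ 2 * Pb ^ 2 + r ^ 2 * Yb ^ 2 - 2 * C * Pb * Yb ≤ (r ^ 2 * F ^ 2 - C ^ 2) * Sb)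
    (hTa : r * Ya = -(F * D1 * Pb)) (hTb : r * Yb = F * D1 * Pa)
    (hSa : 0 ≤ Sa) (hSb : 0 ≤ Sb) :
    (1 + D1 ^ 2) * (Pa ^ 2 + Pb ^ 2) ≤ r ^ 2 * (Sa + Sb) := by
  have hQTa : r ^ 2 * Ya ^ 2 = F ^ 2 * D1 ^ 2 * Pb ^ 2 := by
    have h : (r * Ya) ^ 2 = (-(F * D1 * Pb)) ^ 2 := by rw [hTa]
    linear_combination h
  have hQTb : r ^ 2 * Yb ^ 2 = F ^ 2 * D1 ^ 2 * Pa ^ 2 := by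
    have h : (r * Yb) ^ 2 = (F * D1 * Pa) ^ 2 := by rw [hTb]
    linear_combination h
  have hcross : Pa * Ya + Pb * Yb = 0 := by
    have h : r * (Pa * Ya + Pb * Yb) = 0 := by linear_combination Pa * hTa + Pb * hTb
    exact (mul_eq_zero.1 h).resolve_left hr.ne'
  have hcrossC : C * (Pa * Ya) + C * (Pb * Yb) = 0 := by linear_combination C * hcross
  have hF2 : 0 < F ^ 2 := pow_pos hF 2
  have hbig : F ^ 2 * ((1 + D1 ^ 2) * (Pa ^ 2 + Pb ^ 2)) ≤ F ^ 2 * (r ^ 2 * (Sa + Sb)) := by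
    nlinarith [ga, gb, hQTa, hQTb, hcrossC, mul_nonneg (sq_nonneg C) (add_nonneg hSa hSb)]
  exact (mul_le_mul_iff_right₀ hF2).mp hbig

lemma final_pos (F r D1 D2 Sa Sb Pa Pb : ℝ) (hr : 0 < r) (hF : 0 < F)
    (c1 : F * D1 / r < 1) (c2 : F * (D2 + D1 ^ 3 / r) < 1)
    (key : (1 + D1 ^ 2) * (Pa ^ 2 + Pb ^ 2) ≤ r ^ 2 * (Sa + Sb)) (hA : 0 < Sa + Sb) :
    0 < ((1 - F * D1 / r) * (Sa + Sb)
        - 2 * ((D1 ^ 2 + F * D2 - F * D1 / r) / (2 * r ^ 2)) * (Pa ^ 2 + Pb ^ 2)) / 2 := by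
  have hP : (0:ℝ) ≤ Pa ^ 2 + Pb ^ 2 := by positivity
  have c1' : F * D1 < r := (div_lt_one hr).1 c1
  have c2' : 0 < r * (1 - F * D2) - F * D1 ^ 3 := by
    rw [show F * (D2 + D1 ^ 3 / r) = (F * D2 * r + F * D1 ^ 3) / r from by field_simp,
      div_lt_one hr] at c2
    linarith
  apply div_pos _ two_pos
  have hEq : r ^ 3 * ((1 - F * D1 / r) * (Sa + Sb)
        - 2 * ((D1 ^ 2 + F * D2 - F * D1 / r) / (2 * r ^ 2)) * (Pa ^ 2 + Pb ^ 2))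
      = (r - F * D1) * (r ^ 2 * (Sa + Sb) - (1 + D1 ^ 2) * (Pa ^ 2 + Pb ^ 2))
        + (Pa ^ 2 + Pb ^ 2) * (r * (1 - F * D2) - F * D1 ^ 3) := by
    field_simp
    ring
  have hE : 0 < r ^ 3 * ((1 - F * D1 / r) * (Sa + Sb)
      - 2 * ((D1 ^ 2 + F * D2 - F * D1 / r) / (2 * r ^ 2)) * (Pa ^ 2 + Pb ^ 2)) := by
    rw [hEq]
    have hterm1 : 0 ≤ (r - F * D1) * (r ^ 2 * (Sa + Sb) - (1 + D1 ^ 2) * (Pa ^ 2 + Pb ^ 2)) :=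
      mul_nonneg (by linarith) (by linarith)
    rcases hP.lt_or_eq with hPpos | hP0
    · exact add_pos_of_nonneg_of_pos hterm1 (mul_pos hPpos c2')
    · have h1 : 0 < (r - F * D1) * (r ^ 2 * (Sa + Sb) - (1 + D1 ^ 2) * (Pa ^ 2 + Pb ^ 2)) := by
        apply mul_pos (by linarith)
        have h2 : 0 < r ^ 2 * (Sa + Sb) := mul_pos (pow_pos hr 2) hA
        rw [← hP0]
        linarith
      nlinarith [h1, mul_nonneg hP c2'.le]
  nlinarith [hE, pow_pos hr 3]

theorem stmt_5 {n : ℕ} (hn : 1 < n)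
    (U : Set (Fin n → ℝ)) (hUne : U.Nonempty) (hUopen : IsOpen U)
    (hU0 : (0 : Fin n → ℝ) ∉ U)
    (hUinv : ∀ x x' : Fin n → ℝ, x ∈ U → (∑ j, x' j ^ 2) = (∑ j, x j ^ 2) → x' ∈ U)
    (f : ℝ → ℝ) (V : Set ℝ) (hV : IsOpen V)
    (hIV : {t : ℝ | ∃ x ∈ U, t = Real.sqrt (∑ j, x j ^ 2)} ⊆ V)
    (hf : ContDiffOn ℝ 2 f V)
    (hfpos : ∀ t ∈ {t : ℝ | ∃ x ∈ U, t = Real.sqrt (∑ j, x j ^ 2)}, 0 < f t) :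
    (∀ p ∈ SigmaSetF n U f, ∀ v ∈ complexTangent (rhoF n f) p, v ≠ 0 →
        0 < leviForm (rhoF n f) p v)
    ↔ (∀ t ∈ {t : ℝ | ∃ x ∈ U, t = Real.sqrt (∑ j, x j ^ 2)},
        f t * deriv f t / t < 1 ∧
        f t * (deriv (deriv f) t + (deriv f t) ^ 3 / t) < 1) := by
  classical
  constructor
  · intro hL t ht
    obtain ⟨x, hxU, rfl⟩ := ht
    set t : ℝ := Real.sqrt (∑ j, x j ^ 2) with hts
    have h0 : 0 ≤ ∑ j, x j ^ 2 := by positivity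
    have hQ0 : 0 < ∑ j, x j ^ 2 := by
      rcases h0.lt_or_eq with h | h
      · exact h
      · exfalso; apply hU0
        have hx0 : x = 0 := by
          funext j
          have := (Finset.sum_eq_zero_iff_of_nonneg
            (fun j _ => sq_nonneg (x j))).1 h.symm j (Finset.mem_univ j)
          exact pow_eq_zero_iff two_ne_zero |>.1 this
        rwa [← hx0]
    have ht0 : 0 < t := Real.sqrt_pos.2 hQ0
    have ht' : t ≠ 0 := ht0.ne'
    have ht2 : t ^ 2 = ∑ j, x j ^ 2 := Real.sq_sqrt hQ0.le
    have htI : t ∈ {t : ℝ | ∃ x ∈ U, t = Real.sqrt (∑ j, x j ^ 2)} := ⟨x, hxU, hts⟩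
    have htV : t ∈ V := hIV htI
    have hft : 0 < f t := hfpos t htI
    set i0 : Fin n := ⟨0, by omega⟩ with hi0def
    set i1 : Fin n := ⟨1, by omega⟩ with hi1def
    have hi01 : i0 ≠ i1 := by simp [hi0def, hi1def, Fin.ext_iff]
    have hg1t : g1F f (t ^ 2) = f t * deriv f t / t := by
      rw [g1F, Real.sqrt_sq ht0.le]
    have hg2t : g2F f (t ^ 2) = ((deriv f t) ^ 2 + f t * deriv (deriv f) t
        - f t * deriv f t / t) / (2 * t ^ 2) := by
      rw [g2F, Real.sqrt_sq ht0.le]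
    constructor
    · -- first condition, from point p1 and vector v1
      set p1 : Fin n → ℂ := mkz (Pi.single i0 t) (Pi.single i0 (f t)) with hp1def
      set v1 : Fin n → ℂ := mkz (Pi.single i1 1) 0 with hv1def
      have hp1Q : ∑ j, (p1 j).re ^ 2 = t ^ 2 := by
        simp only [hp1def, mkz_re]; exact sum_single_sq i0 t
      have hp1pos : 0 < ∑ j, (p1 j).re ^ 2 := by rw [hp1Q]; positivity
      have hp1rt : Real.sqrt (∑ j, (p1 j).re ^ 2) = t := by rw [hp1Q, Real.sqrt_sq ht0.le]
      have hp1V : Real.sqrt (∑ j, (p1 j).re ^ 2) ∈ V := by rw [hp1rt]; exact htV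
      have hx'U : (Pi.single i0 t : Fin n → ℝ) ∈ U :=
        hUinv x _ hxU (by rw [sum_single_sq]; exact ht2)
      have hp1S : p1 ∈ SigmaSetF n U f := by
        refine ⟨hx'U, ?_⟩
        have him : ∑ j, (p1 j).im ^ 2 = (f t) ^ 2 := by
          simp only [hp1def, mkz_im]; exact sum_single_sq i0 (f t)
        rw [him, hp1rt, Real.sqrt_sq hft.le]
      have S1 : ∑ j, (p1 j).im * (v1 j).im = 0 := by
        simp [hv1def, mkz_im]
      have S2 : ∑ j, (p1 j).re * (v1 j).re = 0 := by
        simp only [hp1def, hv1def, mkz_re]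
        rw [sum_mul_single, Pi.single_eq_of_ne (Ne.symm hi01)]
        ring
      have S3 : ∑ j, (p1 j).im * (v1 j).re = 0 := by
        simp only [hp1def, hv1def, mkz_re, mkz_im]
        rw [sum_mul_single, Pi.single_eq_of_ne (Ne.symm hi01)]
        ring
      have S4 : ∑ j, (p1 j).re * (v1 j).im = 0 := by
        simp [hv1def, mkz_im]
      have S5 : ∑ j, (v1 j).re ^ 2 = 1 := by
        simp only [hv1def, mkz_re]; rw [sum_single_sq]; norm_num
      have S6 : ∑ j, (v1 j).im ^ 2 = 0 := by
        simp [hv1def, mkz_im]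
      have hv1tan : v1 ∈ complexTangent (rhoF n f) p1 := by
        constructor
        · rw [fderiv_rhoF_apply hV hf hp1pos hp1V, S1, S2]; ring
        · rw [fderiv_rhoF_apply_I hV hf hp1pos hp1V, S3, S4]; ring
      have hv1ne : v1 ≠ 0 := by
        intro h
        have h2 : (v1 i1).re = 0 := by rw [congrFun h i1]; rfl
        rw [hv1def] at h2
        simp [mkz_re, Pi.single_eq_same] at h2
      have h1 := hL p1 hp1S v1 hv1tan hv1ne
      rw [leviForm_rhoF_eq hV hf hp1pos hp1V, S5, S6, S2, S4, hp1Q, hg1t] at h1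
      nlinarith [h1]
    · -- second condition, from point p2 and vector v2
      set p2 : Fin n → ℂ := mkz (Pi.single i0 t) (Pi.single i1 (f t)) with hp2def
      set v2 : Fin n → ℂ := mkz (Pi.single i0 1) (Pi.single i1 (deriv f t)) with hv2def
      have hp2Q : ∑ j, (p2 j).re ^ 2 = t ^ 2 := by
        simp only [hp2def, mkz_re]; exact sum_single_sq i0 t
      have hp2pos : 0 < ∑ j, (p2 j).re ^ 2 := by rw [hp2Q]; positivity
      have hp2rt : Real.sqrt (∑ j, (p2 j).re ^ 2) = t := by rw [hp2Q, Real.sqrt_sq ht0.le]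
      have hp2V : Real.sqrt (∑ j, (p2 j).re ^ 2) ∈ V := by rw [hp2rt]; exact htV
      have hx'U : (Pi.single i0 t : Fin n → ℝ) ∈ U :=
        hUinv x _ hxU (by rw [sum_single_sq]; exact ht2)
      have hp2S : p2 ∈ SigmaSetF n U f := by
        refine ⟨hx'U, ?_⟩
        have him : ∑ j, (p2 j).im ^ 2 = (f t) ^ 2 := by
          simp only [hp2def, mkz_im]; exact sum_single_sq i1 (f t)
        rw [him, hp2rt, Real.sqrt_sq hft.le]
      have T1 : ∑ j, (p2 j).im * (v2 j).im = f t * deriv f t := by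
        simp only [hp2def, hv2def, mkz_im]
        rw [sum_mul_single, Pi.single_eq_same]
      have T2 : ∑ j, (p2 j).re * (v2 j).re = t := by
        simp only [hp2def, hv2def, mkz_re]
        rw [sum_mul_single, Pi.single_eq_same]
        ring
      have T3 : ∑ j, (p2 j).im * (v2 j).re = 0 := by
        simp only [hp2def, hv2def, mkz_re, mkz_im]
        rw [sum_mul_single, Pi.single_eq_of_ne hi01]
        ring
      have T4 : ∑ j, (p2 j).re * (v2 j).im = 0 := by
        simp only [hp2def, hv2def, mkz_re, mkz_im]
        rw [sum_mul_single, Pi.single_eq_of_ne (Ne.symm hi01)]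
        ring
      have T5 : ∑ j, (v2 j).re ^ 2 = 1 := by
        simp only [hv2def, mkz_re]; rw [sum_single_sq]; norm_num
      have T6 : ∑ j, (v2 j).im ^ 2 = (deriv f t) ^ 2 := by
        simp only [hv2def, mkz_im]; exact sum_single_sq i1 (deriv f t)
      have hv2tan : v2 ∈ complexTangent (rhoF n f) p2 := by
        constructor
        · rw [fderiv_rhoF_apply hV hf hp2pos hp2V, T1, T2, hp2Q, hg1t]
          field_simp
          ring
        · rw [fderiv_rhoF_apply_I hV hf hp2pos hp2V, T3, T4]; ring
      have hv2ne : v2 ≠ 0 := by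
        intro h
        have h2 : (v2 i0).re = 0 := by rw [congrFun h i0]; rfl
        rw [hv2def] at h2
        simp [mkz_re, Pi.single_eq_same] at h2
      have h2 := hL p2 hp2S v2 hv2tan hv2ne
      rw [leviForm_rhoF_eq hV hf hp2pos hp2V, T5, T6, T2, T4, hp2Q, hg1t, hg2t] at h2
      have h3 : 0 < t ^ 2 := by positivity
      field_simp at h2
      rw [show deriv (deriv f) t + deriv f t ^ 3 / t
            = (deriv (deriv f) t * t + deriv f t ^ 3) / t from by field_simp,
        ← mul_div_assoc, div_lt_one ht0]
      nlinarith [h2, pow_pos ht0 3, mul_pos ht0 ht0]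
  · intro hcond p hp v hv hvne
    obtain ⟨hxU, hys⟩ := hp
    have hQnn : (0:ℝ) ≤ ∑ j, (p j).re ^ 2 := by positivity
    have hQ0 : 0 < ∑ j, (p j).re ^ 2 := by
      rcases hQnn.lt_or_eq with h | h
      · exact h
      · exfalso; apply hU0
        have hx0 : (fun j => (p j).re) = 0 := by
          funext j
          have := (Finset.sum_eq_zero_iff_of_nonneg
            (fun j _ => sq_nonneg ((p j).re))).1 h.symm j (Finset.mem_univ j)
          exact pow_eq_zero_iff two_ne_zero |>.1 this
        rwa [← hx0]
    set r : ℝ := Real.sqrt (∑ j, (p j).re ^ 2) with hrdef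
    have hr0 : 0 < r := Real.sqrt_pos.2 hQ0
    have hr' : r ≠ 0 := hr0.ne'
    have hQr : (∑ j, (p j).re ^ 2) = r ^ 2 := by rw [hrdef, Real.sq_sqrt hQ0.le]
    have hrI : r ∈ {t : ℝ | ∃ x ∈ U, t = Real.sqrt (∑ j, x j ^ 2)} :=
      ⟨fun j => (p j).re, hxU, by rw [hrdef]⟩
    have hrV : r ∈ V := hIV hrI
    have hfr : 0 < f r := hfpos r hrI
    obtain ⟨c1, c2⟩ := hcond r hrI
    have hy2 : ∑ j, (p j).im ^ 2 = (f r) ^ 2 := by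
      rw [← hys, Real.sq_sqrt (by positivity)]
    obtain ⟨ht1, ht2⟩ := hv
    rw [fderiv_rhoF_apply hV hf hQ0 hrV] at ht1
    rw [fderiv_rhoF_apply_I hV hf hQ0 hrV] at ht2
    rw [leviForm_rhoF_eq hV hf hQ0 hrV]
    have hg1r : g1F f (∑ j, (p j).re ^ 2) = f r * deriv f r / r := by
      rw [g1F]
    have hg2r : g2F f (∑ j, (p j).re ^ 2)
        = ((deriv f r) ^ 2 + f r * deriv (deriv f) r - f r * deriv f r / r) / (2 * r ^ 2) := by
      rw [g2F, hQr, Real.sqrt_sq hr0.le]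
    rw [hg1r] at ht1 ht2
    rw [hg1r, hg2r]
    have ga : (∑ j, (p j).im ^ 2) * (∑ j, (p j).re * (v j).re) ^ 2
          + (∑ j, (p j).re ^ 2) * (∑ j, (p j).im * (v j).re) ^ 2
          - 2 * (∑ j, (p j).re * (p j).im) * (∑ j, (p j).re * (v j).re)
              * (∑ j, (p j).im * (v j).re)
        ≤ ((∑ j, (p j).re ^ 2) * (∑ j, (p j).im ^ 2) - (∑ j, (p j).re * (p j).im) ^ 2)
            * (∑ j, (v j).re ^ 2) := by
      simpa using gram_ineq (fun j => (p j).re) (fun j => (p j).im) (fun j => (v j).re)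
    have gb : (∑ j, (p j).im ^ 2) * (∑ j, (p j).re * (v j).im) ^ 2
          + (∑ j, (p j).re ^ 2) * (∑ j, (p j).im * (v j).im) ^ 2
          - 2 * (∑ j, (p j).re * (p j).im) * (∑ j, (p j).re * (v j).im)
              * (∑ j, (p j).im * (v j).im)
        ≤ ((∑ j, (p j).re ^ 2) * (∑ j, (p j).im ^ 2) - (∑ j, (p j).re * (p j).im) ^ 2)
            * (∑ j, (v j).im ^ 2) := by
      simpa using gram_ineq (fun j => (p j).re) (fun j => (p j).im) (fun j => (v j).im)
    rw [hy2, hQr] at ga gb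
    have hSa : (0:ℝ) ≤ ∑ j, (v j).re ^ 2 := by positivity
    have hSb : (0:ℝ) ≤ ∑ j, (v j).im ^ 2 := by positivity
    have hA0 : 0 < (∑ j, (v j).re ^ 2) + ∑ j, (v j).im ^ 2 := by
      rcases (add_nonneg hSa hSb).lt_or_eq with h | h
      · exact h
      · exfalso; apply hvne
        have hva : (∑ j, (v j).re ^ 2) = 0 := by
          have := add_eq_zero_iff_of_nonneg hSa hSb |>.1 h.symm
          exact this.1
        have hvb : (∑ j, (v j).im ^ 2) = 0 := by
          have := add_eq_zero_iff_of_nonneg hSa hSb |>.1 h.symm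
          exact this.2
        funext j
        have h1 := (Finset.sum_eq_zero_iff_of_nonneg
          (fun j _ => sq_nonneg ((v j).re))).1 hva j (Finset.mem_univ j)
        have h2 := (Finset.sum_eq_zero_iff_of_nonneg
          (fun j _ => sq_nonneg ((v j).im))).1 hvb j (Finset.mem_univ j)
        have h1' := pow_eq_zero_iff two_ne_zero |>.1 h1
        have h2' := pow_eq_zero_iff two_ne_zero |>.1 h2
        exact Complex.ext h1' h2'
    set Sa := ∑ j, (v j).re ^ 2 with hSadef
    set Sb := ∑ j, (v j).im ^ 2 with hSbdef
    set Pa := ∑ j, (p j).re * (v j).re with hPadef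
    set Pb := ∑ j, (p j).re * (v j).im with hPbdef
    set Ya := ∑ j, (p j).im * (v j).re with hYadef
    set Yb := ∑ j, (p j).im * (v j).im with hYbdef
    set C := ∑ j, (p j).re * (p j).im with hCdef
    set F := f r with hFdef
    set D1 := deriv f r with hD1def
    set D2 := deriv (deriv f) r with hD2def
    clear_value r Sa Sb Pa Pb Ya Yb C F D1 D2
    -- tangency relations
    have hTb : r * Yb = F * D1 * Pa := by
      field_simp at ht1
      linarith
    have hTa : r * Ya = -(F * D1 * Pb) := by
      field_simp at ht2
      linarith
    have key := key_ineq F r C D1 Sa Sb Pa Pb Ya Yb hfr hr0 ga gb hTa hTb hSa hSb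
    exact final_pos F r D1 D2 Sa Sb Pa Pb hr0 hfr c1 c2 key hA0
end aux
end

section
/- Let n > 1, let U ⊂ ℝⁿ∖{0} be an open O(n)-invariant set, I = {|x| : x ∈ U}, and let f : I → (0,∞) be of class C² satisfying the differential equation f(t) ( f''(t) + f'(t)³/t ) = 1 for all t ∈ I. Set ρ(x+iy) = |y|² − f(|x|)² and Σ = {x+iy : x ∈ U, |y| = f(|x|)}. If f(t) f'(t)/t < 1 for all t ∈ I, then L_ρ(p;v) ≥ 0 for every p ∈ Σ and every v ∈ T_p^ℂΣ (D₋ = {|y| < f(|x|)} is weakly pseudoconvex along Σ); if f(t) f'(t)/t > 1 for all t ∈ I, then L_ρ(p;v) ≤ 0 for every p ∈ Σ and every v ∈ T_p^ℂΣ (D₊ = {|y| > f(|x|)} is weakly pseudoconvex along Σ). -/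
open Complex Set Topology Filter

lemma phi_hasDerivAt {f : ℝ → ℝ} {V : Set ℝ} (hV : IsOpen V) (hf : ContDiffOn ℝ 2 f V)
    {σ : ℝ} (hσ : 0 < σ) (hσV : Real.sqrt σ ∈ V) :
    HasDerivAt (fun t => (f (Real.sqrt t))^2)
      (f (Real.sqrt σ) * deriv f (Real.sqrt σ) / Real.sqrt σ) σ := by
  have hr : Real.sqrt σ ≠ 0 := (Real.sqrt_pos.2 hσ).ne'
  have h1 : HasDerivAt Real.sqrt (1/(2*Real.sqrt σ)) σ := Real.hasDerivAt_sqrt hσ.ne'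
  have h2 : HasDerivAt f (deriv f (Real.sqrt σ)) (Real.sqrt σ) :=
    ((hf.contDiffAt (hV.mem_nhds hσV)).differentiableAt (by norm_num)).hasDerivAt
  have h3 := h2.comp σ h1
  have h4 := h3.fun_pow 2
  refine h4.congr_deriv ?_
  simp only [Function.comp_apply]
  field_simp
  ring

lemma psi_hasDerivAt {f : ℝ → ℝ} {V : Set ℝ} (hV : IsOpen V) (hf : ContDiffOn ℝ 2 f V)
    {σ : ℝ} (hσ : 0 < σ) (hσV : Real.sqrt σ ∈ V) :
    HasDerivAt (fun t => f (Real.sqrt t) * deriv f (Real.sqrt t) / Real.sqrt t)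
      (((deriv f (Real.sqrt σ) * deriv f (Real.sqrt σ)
          + f (Real.sqrt σ) * deriv (deriv f) (Real.sqrt σ)) * Real.sqrt σ
          - f (Real.sqrt σ) * deriv f (Real.sqrt σ)) / (Real.sqrt σ)^2
        * (1/(2*Real.sqrt σ))) σ := by
  have hr : Real.sqrt σ ≠ 0 := (Real.sqrt_pos.2 hσ).ne'
  have h1 : HasDerivAt Real.sqrt (1/(2*Real.sqrt σ)) σ := Real.hasDerivAt_sqrt hσ.ne'
  have h2 : HasDerivAt f (deriv f (Real.sqrt σ)) (Real.sqrt σ) :=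
    ((hf.contDiffAt (hV.mem_nhds hσV)).differentiableAt (by norm_num)).hasDerivAt
  have hf' : ContDiffOn ℝ 1 (deriv f) V := hf.deriv_of_isOpen hV (by norm_num)
  have h2' : HasDerivAt (deriv f) (deriv (deriv f) (Real.sqrt σ)) (Real.sqrt σ) :=
    ((hf'.contDiffAt (hV.mem_nhds hσV)).differentiableAt one_ne_zero).hasDerivAt
  have hG : HasDerivAt (fun t => f t * deriv f t / t)
      (((deriv f (Real.sqrt σ) * deriv f (Real.sqrt σ)
          + f (Real.sqrt σ) * deriv (deriv f) (Real.sqrt σ)) * Real.sqrt σ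
          - f (Real.sqrt σ) * deriv f (Real.sqrt σ) * 1) / (Real.sqrt σ)^2)
      (Real.sqrt σ) := (h2.mul h2').div (hasDerivAt_id _) hr
  have := hG.comp σ h1
  refine this.congr_deriv ?_
  ring

lemma key_ineq_s7 {n : ℕ} (x y a b : Fin n → ℝ) {r fr m ψ : ℝ}
    (hr : 0 < r) (hfr : 0 < fr)
    (hx : ∑ j, x j ^ 2 = r ^ 2) (hy : ∑ j, y j ^ 2 = fr ^ 2)
    (h1 : ∑ j, y j * b j = ψ * (∑ j, x j * a j))
    (h2 : ∑ j, y j * a j = -(ψ * (∑ j, x j * b j)))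
    (hψ : ψ * r = fr * m) :
    (1 + m ^ 2) * ((∑ j, x j * a j) ^ 2 + (∑ j, x j * b j) ^ 2)
      ≤ r ^ 2 * ((∑ j, a j ^ 2) + (∑ j, b j ^ 2)) := by
  set α := ∑ j, x j * a j with hα
  set β := ∑ j, x j * b j with hβ
  set c := ∑ j, x j * y j with hc
  set P := ∑ j, a j ^ 2 with hP
  set Q := ∑ j, b j ^ 2 with hQ
  have cs1 : (∑ j, (r^2 * a j - α * x j) * y j) ^ 2
      ≤ (∑ j, (r^2 * a j - α * x j) ^ 2) * (∑ j, y j ^ 2) :=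
    Finset.sum_mul_sq_le_sq_mul_sq _ _ _
  have cs2 : (∑ j, (r^2 * b j - β * x j) * y j) ^ 2
      ≤ (∑ j, (r^2 * b j - β * x j) ^ 2) * (∑ j, y j ^ 2) :=
    Finset.sum_mul_sq_le_sq_mul_sq _ _ _
  have e1 : ∑ j, (r^2 * a j - α * x j) * y j = r^2 * (∑ j, y j * a j) - α * c := by
    rw [Finset.mul_sum, Finset.mul_sum, ← Finset.sum_sub_distrib]
    exact Finset.sum_congr rfl fun j _ => by ring
  have e2 : ∑ j, (r^2 * b j - β * x j) * y j = r^2 * (∑ j, y j * b j) - β * c := by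
    rw [Finset.mul_sum, Finset.mul_sum, ← Finset.sum_sub_distrib]
    exact Finset.sum_congr rfl fun j _ => by ring
  have e3 : ∑ j, (r^2 * a j - α * x j) ^ 2 = r^4 * P - 2*r^2*α^2 + α^2 * (∑ j, x j ^2) := by
    have h : ∀ j, (r^2 * a j - α * x j)^2
        = r^4 * a j^2 - (2*r^2*α) * (x j * a j) + α^2 * x j^2 := fun j => by ring
    simp_rw [h]
    rw [Finset.sum_add_distrib, Finset.sum_sub_distrib, ← Finset.mul_sum, ← Finset.mul_sum,
      ← Finset.mul_sum, ← hα, ← hP]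
    ring
  have e4 : ∑ j, (r^2 * b j - β * x j) ^ 2 = r^4 * Q - 2*r^2*β^2 + β^2 * (∑ j, x j ^2) := by
    have h : ∀ j, (r^2 * b j - β * x j)^2
        = r^4 * b j^2 - (2*r^2*β) * (x j * b j) + β^2 * x j^2 := fun j => by ring
    simp_rw [h]
    rw [Finset.sum_add_distrib, Finset.sum_sub_distrib, ← Finset.mul_sum, ← Finset.mul_sum,
      ← Finset.mul_sum, ← hβ, ← hQ]
    ring
  rw [e1, e3, hx, hy, h2] at cs1
  rw [e2, e4, hx, hy, h1] at cs2
  have hr2 : 0 < r^2 := by positivity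
  have hfr2 : 0 < fr^2 := by positivity
  have hψ4 : r^4*ψ^2*(α^2+β^2) = r^2*fr^2*m^2*(α^2+β^2) := by
    have h2' : ψ^2*r^2 = fr^2*m^2 := by rw [← mul_pow, ← mul_pow, hψ]
    linear_combination (r^2*(α^2+β^2)) * h2'
  have main : (1+m^2)*(α^2+β^2) * (r^2*fr^2) ≤ r^2*(P+Q) * (r^2*fr^2) := by
    nlinarith [cs1, cs2, hψ4, mul_nonneg (sq_nonneg c) (add_nonneg (sq_nonneg α) (sq_nonneg β))]
  exact le_of_mul_le_mul_right main (mul_pos hr2 hfr2)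


noncomputable def ReL (n : ℕ) (j : Fin n) : (Fin n → ℂ) →L[ℝ] ℝ :=
  Complex.reCLM.comp (ContinuousLinearMap.proj j)

noncomputable def ImL (n : ℕ) (j : Fin n) : (Fin n → ℂ) →L[ℝ] ℝ :=
  Complex.imCLM.comp (ContinuousLinearMap.proj j)

@[simp] lemma ReL_apply {n : ℕ} (j : Fin n) (z : Fin n → ℂ) : ReL n j z = (z j).re := rfl
@[simp] lemma ImL_apply {n : ℕ} (j : Fin n) (z : Fin n → ℂ) : ImL n j z = (z j).im := rfl

noncomputable def MM (n : ℕ) : (Fin n → ℂ) →L[ℝ] ((Fin n → ℂ) →L[ℝ] ℝ) :=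
  ∑ j, (ReL n j).smulRight (ReL n j)

noncomputable def LL (n : ℕ) : (Fin n → ℂ) →L[ℝ] ((Fin n → ℂ) →L[ℝ] ℝ) :=
  ∑ j, (ImL n j).smulRight (ImL n j)

lemma MM_apply {n : ℕ} (z v : Fin n → ℂ) : MM n z v = ∑ j, (z j).re * (v j).re := by
  simp [MM, ContinuousLinearMap.sum_apply, smul_eq_mul]

lemma LL_apply {n : ℕ} (z v : Fin n → ℂ) : LL n z v = ∑ j, (z j).im * (v j).im := by
  simp [LL, ContinuousLinearMap.sum_apply, smul_eq_mul]

lemma hasFDerivAt_sfun {n : ℕ} (z : Fin n → ℂ) :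
    HasFDerivAt (fun z : Fin n → ℂ => ∑ j, (z j).re ^ 2) ((2:ℝ) • MM n z) z := by
  have h : ∀ j : Fin n, HasFDerivAt (fun z : Fin n → ℂ => (z j).re ^ 2)
      (((2:ℝ) * (z j).re) • ReL n j) z := by
    intro j
    have h1 : HasFDerivAt (fun z : Fin n → ℂ => ReL n j z) (ReL n j) z := (ReL n j).hasFDerivAt
    have h2 := h1.fun_mul h1
    have he : ((2:ℝ) * (z j).re) • ReL n j = ReL n j z • ReL n j + ReL n j z • ReL n j := by
      ext w; simp; ring
    rw [he]
    simp only [pow_two]; exact h2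
  have hsum := HasFDerivAt.fun_sum (fun j (_ : j ∈ Finset.univ) => h j)
  refine hsum.congr_fderiv ?_
  ext w
  simp [MM, ContinuousLinearMap.sum_apply, Finset.mul_sum, smul_eq_mul]
  exact Finset.sum_congr rfl fun j _ => by ring

lemma hasFDerivAt_qfun {n : ℕ} (z : Fin n → ℂ) :
    HasFDerivAt (fun z : Fin n → ℂ => ∑ j, (z j).im ^ 2) ((2:ℝ) • LL n z) z := by
  have h : ∀ j : Fin n, HasFDerivAt (fun z : Fin n → ℂ => (z j).im ^ 2)
      (((2:ℝ) * (z j).im) • ImL n j) z := by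
    intro j
    have h1 : HasFDerivAt (fun z : Fin n → ℂ => ImL n j z) (ImL n j) z := (ImL n j).hasFDerivAt
    have h2 := h1.fun_mul h1
    have he : ((2:ℝ) * (z j).im) • ImL n j = ImL n j z • ImL n j + ImL n j z • ImL n j := by
      ext w; simp; ring
    rw [he]
    simp only [pow_two]; exact h2
  have hsum := HasFDerivAt.fun_sum (fun j (_ : j ∈ Finset.univ) => h j)
  refine hsum.congr_fderiv ?_
  ext w
  simp [LL, ContinuousLinearMap.sum_apply, Finset.mul_sum, smul_eq_mul]
  exact Finset.sum_congr rfl fun j _ => by ring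

lemma rho_hasFDerivAt {n : ℕ} {f : ℝ → ℝ} {V : Set ℝ} (hV : IsOpen V)
    (hf : ContDiffOn ℝ 2 f V) {z : Fin n → ℂ}
    (hz1 : 0 < ∑ j, (z j).re ^ 2) (hz2 : Real.sqrt (∑ j, (z j).re ^ 2) ∈ V) :
    HasFDerivAt (rhoF n f)
      ((2:ℝ) • LL n z
        - (f (Real.sqrt (∑ j, (z j).re ^ 2)) * deriv f (Real.sqrt (∑ j, (z j).re ^ 2))
            / Real.sqrt (∑ j, (z j).re ^ 2)) • ((2:ℝ) • MM n z)) z := by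
  have hq := hasFDerivAt_qfun z
  have hφ := (phi_hasDerivAt hV hf hz1 hz2).comp_hasFDerivAt z (hasFDerivAt_sfun z)
  exact hq.sub hφ
lemma rho_second_fderiv {n : ℕ} {f : ℝ → ℝ} {V : Set ℝ} (hV : IsOpen V)
    (hf : ContDiffOn ℝ 2 f V) {p : Fin n → ℂ}
    (hp1 : 0 < ∑ j, (p j).re ^ 2) (hp2 : Real.sqrt (∑ j, (p j).re ^ 2) ∈ V) :
    fderiv ℝ (fderiv ℝ (rhoF n f)) p =
      (2:ℝ) • LL n -
        ((f (Real.sqrt (∑ j, (p j).re ^ 2)) * deriv f (Real.sqrt (∑ j, (p j).re ^ 2)) /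
            Real.sqrt (∑ j, (p j).re ^ 2)) • ((2:ℝ) • MM n) +
          ((((deriv f (Real.sqrt (∑ j, (p j).re ^ 2)) * deriv f (Real.sqrt (∑ j, (p j).re ^ 2))
              + f (Real.sqrt (∑ j, (p j).re ^ 2)) * deriv (deriv f) (Real.sqrt (∑ j, (p j).re ^ 2)))
                * Real.sqrt (∑ j, (p j).re ^ 2)
              - f (Real.sqrt (∑ j, (p j).re ^ 2)) * deriv f (Real.sqrt (∑ j, (p j).re ^ 2)))
              / (Real.sqrt (∑ j, (p j).re ^ 2))^2 * (1/(2*Real.sqrt (∑ j, (p j).re ^ 2))))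
            • (((2:ℝ) • MM n) p)).smulRight (((2:ℝ) • MM n) p)) := by
  have hcont : Continuous (fun z : Fin n → ℂ => ∑ j, (z j).re ^ 2) :=
    continuous_finset_sum _ fun j _ => (Complex.continuous_re.comp (continuous_apply j)).pow 2
  have hWopen : IsOpen {z : Fin n → ℂ |
      0 < ∑ j, (z j).re ^ 2 ∧ Real.sqrt (∑ j, (z j).re ^ 2) ∈ V} := by
    have h1 : IsOpen {z : Fin n → ℂ | 0 < ∑ j, (z j).re ^ 2} := isOpen_Ioi.preimage hcont
    have h2 : IsOpen {z : Fin n → ℂ | Real.sqrt (∑ j, (z j).re ^ 2) ∈ V} :=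
      hV.preimage (Real.continuous_sqrt.comp hcont)
    exact h1.inter h2
  have hev : fderiv ℝ (rhoF n f) =ᶠ[𝓝 p] (fun z =>
      (2:ℝ) • LL n z
        - (f (Real.sqrt (∑ j, (z j).re ^ 2)) * deriv f (Real.sqrt (∑ j, (z j).re ^ 2))
            / Real.sqrt (∑ j, (z j).re ^ 2)) • ((2:ℝ) • MM n z)) :=
    Filter.eventuallyEq_of_mem (hWopen.mem_nhds ⟨hp1, hp2⟩)
      (fun z (hz : z ∈ {z : Fin n → ℂ |
        0 < ∑ j, (z j).re ^ 2 ∧ Real.sqrt (∑ j, (z j).re ^ 2) ∈ V}) =>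
        (rho_hasFDerivAt hV hf hz.1 hz.2).fderiv)
  rw [hev.fderiv_eq]
  have hc := (psi_hasDerivAt hV hf hp1 hp2).comp_hasFDerivAt p (hasFDerivAt_sfun p)
  have hsm := hc.smul (((2:ℝ) • MM n).hasFDerivAt (x := p))
  have htot := (((2:ℝ) • LL n).hasFDerivAt (x := p)).sub hsm
  exact htot.fderiv

set_option maxHeartbeats 1000000 in
theorem stmt_7 {n : ℕ} (hn : 1 < n)
    (U : Set (Fin n → ℝ)) (hUne : U.Nonempty) (hUopen : IsOpen U)
    (hU0 : (0 : Fin n → ℝ) ∉ U)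
    (hUinv : ∀ x x' : Fin n → ℝ, x ∈ U → (∑ j, x' j ^ 2) = (∑ j, x j ^ 2) → x' ∈ U)
    (f : ℝ → ℝ) (V : Set ℝ) (hV : IsOpen V)
    (hIV : {t : ℝ | ∃ x ∈ U, t = Real.sqrt (∑ j, x j ^ 2)} ⊆ V)
    (hf : ContDiffOn ℝ 2 f V)
    (hfpos : ∀ t ∈ {t : ℝ | ∃ x ∈ U, t = Real.sqrt (∑ j, x j ^ 2)}, 0 < f t)
    (hode : ∀ t ∈ {t : ℝ | ∃ x ∈ U, t = Real.sqrt (∑ j, x j ^ 2)},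
      f t * (deriv (deriv f) t + (deriv f t) ^ 3 / t) = 1) :
    ((∀ t ∈ {t : ℝ | ∃ x ∈ U, t = Real.sqrt (∑ j, x j ^ 2)}, f t * deriv f t / t < 1) →
      ∀ p ∈ SigmaSetF n U f, ∀ v ∈ complexTangent (rhoF n f) p,
        0 ≤ leviForm (rhoF n f) p v) ∧
    ((∀ t ∈ {t : ℝ | ∃ x ∈ U, t = Real.sqrt (∑ j, x j ^ 2)}, 1 < f t * deriv f t / t) →
      ∀ p ∈ SigmaSetF n U f, ∀ v ∈ complexTangent (rhoF n f) p,
        leviForm (rhoF n f) p v ≤ 0) := by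
  have KEY : ∀ p ∈ SigmaSetF n U f, ∀ v ∈ complexTangent (rhoF n f) p,
      ∃ t ∈ {t : ℝ | ∃ x ∈ U, t = Real.sqrt (∑ j, x j ^ 2)}, ∃ B : ℝ, 0 ≤ B ∧
        leviForm (rhoF n f) p v = (1 - f t * deriv f t / t) * B := by
    rintro p ⟨hpU, hpy⟩ v ⟨hv1, hv2⟩
    have hs₀nn : 0 ≤ ∑ j, (p j).re ^ 2 := Finset.sum_nonneg fun j _ => sq_nonneg _
    have hs₀pos : 0 < ∑ j, (p j).re ^ 2 := by
      rcases hs₀nn.lt_or_eq with h | h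
      · exact h
      · exfalso
        exact hU0 (hUinv (fun j => (p j).re) 0 hpU (by simpa using h))
    set r := Real.sqrt (∑ j, (p j).re ^ 2) with hrdef
    have hrpos : 0 < r := Real.sqrt_pos.2 hs₀pos
    have hrI : r ∈ {t : ℝ | ∃ x ∈ U, t = Real.sqrt (∑ j, x j ^ 2)} := ⟨_, hpU, rfl⟩
    have hrV : r ∈ V := hIV hrI
    have hr2 : r ^ 2 = ∑ j, (p j).re ^ 2 := Real.sq_sqrt hs₀nn
    have hF0pos : 0 < f r := hfpos r hrI
    set F0 := f r with hF0def
    set m := deriv f r with hmdef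
    set F2 := deriv (deriv f) r with hF2def
    set ψ0 := F0 * m / r with hψ0def
    set χ : ℝ := ((m * m + F0 * F2) * r - F0 * m) / r ^ 2 * (1 / (2 * r)) with hχdef
    have hODE : F0 * (F2 + m ^ 3 / r) = 1 := hode r hrI
    have hODE' : F0 * F2 * r + F0 * m ^ 3 = r := by
      field_simp at hODE
      linear_combination hODE
    have hχr : 2 * χ * r ^ 2 = (1 + m ^ 2) * (1 - ψ0) := by
      rw [hχdef, hψ0def]
      field_simp
      linear_combination hODE'
    -- first derivative and tangency
    have hfd := (rho_hasFDerivAt hV hf hs₀pos hrV).fderiv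
    have ht1 : ∑ j, (p j).im * (v j).im = ψ0 * (∑ j, (p j).re * (v j).re) := by
      have h := hv1
      rw [hfd] at h
      simp only [ContinuousLinearMap.sub_apply, ContinuousLinearMap.smul_apply, LL_apply,
        MM_apply, smul_eq_mul, ← hrdef, ← hF0def, ← hmdef, ← hψ0def] at h
      linear_combination h / 2
    have ht2 : ∑ j, (p j).im * (v j).re = -(ψ0 * (∑ j, (p j).re * (v j).im)) := by
      have h := hv2
      rw [hfd] at h
      simp only [ContinuousLinearMap.sub_apply, ContinuousLinearMap.smul_apply, LL_apply,
        MM_apply, smul_eq_mul, Pi.smul_apply, Complex.smul_re, Complex.smul_im,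
        Complex.mul_re, Complex.mul_im, Complex.I_re, Complex.I_im, zero_mul, one_mul,
        zero_sub, zero_add, mul_neg, Finset.sum_neg_distrib,
        ← hrdef, ← hF0def, ← hmdef, ← hψ0def] at h
      linear_combination h / 2
    -- second derivative
    have h2nd := rho_second_fderiv hV hf hs₀pos hrV
    rw [← hrdef, ← hF0def, ← hmdef, ← hF2def] at h2nd
    have hH : ∀ w₁ w₂ : Fin n → ℂ, iteratedFDeriv ℝ 2 (rhoF n f) p ![w₁, w₂] =
        2 * (∑ j, (w₁ j).im * (w₂ j).im)
          - (ψ0 * (2 * (∑ j, (w₁ j).re * (w₂ j).re))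
            + (χ * (2 * (∑ j, (p j).re * (w₁ j).re)))
              * (2 * (∑ j, (p j).re * (w₂ j).re))) := by
      intro w₁ w₂
      rw [iteratedFDeriv_two_apply, h2nd]
      simp only [Matrix.cons_val_zero, Matrix.cons_val_one, Matrix.head_cons,
        ContinuousLinearMap.sub_apply, ContinuousLinearMap.add_apply,
        ContinuousLinearMap.smul_apply, ContinuousLinearMap.smulRight_apply,
        ContinuousLinearMap.coe_smul', Pi.smul_apply, LL_apply, MM_apply, smul_eq_mul,
        ← hψ0def, ← hχdef]
      try ring
    -- sums conversions for I • v
    have cI1 : ∑ j, ((Complex.I • v) j).im * ((Complex.I • v) j).im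
        = ∑ j, (v j).re ^ 2 := by
      refine Finset.sum_congr rfl fun j _ => ?_
      simp [Complex.mul_im, pow_two]
    have cI2 : ∑ j, ((Complex.I • v) j).re * ((Complex.I • v) j).re
        = ∑ j, (v j).im ^ 2 := by
      refine Finset.sum_congr rfl fun j _ => ?_
      simp [Complex.mul_re, pow_two]
    have cI3 : ∑ j, (p j).re * ((Complex.I • v) j).re = -∑ j, (p j).re * (v j).im := by
      rw [← Finset.sum_neg_distrib]
      refine Finset.sum_congr rfl fun j _ => ?_
      simp [Complex.mul_re]
    have cv1 : ∑ j, (v j).im * (v j).im = ∑ j, (v j).im ^ 2 :=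
      Finset.sum_congr rfl fun j _ => (pow_two _).symm
    have cv2 : ∑ j, (v j).re * (v j).re = ∑ j, (v j).re ^ 2 :=
      Finset.sum_congr rfl fun j _ => (pow_two _).symm
    -- key inequality
    have hx : ∑ j, (fun j => (p j).re) j ^ 2 = r ^ 2 := hr2.symm
    have hy2 : ∑ j, (fun j => (p j).im) j ^ 2 = F0 ^ 2 := by
      have h0 : 0 ≤ ∑ j, (p j).im ^ 2 := Finset.sum_nonneg fun j _ => sq_nonneg _
      calc ∑ j, (p j).im ^ 2 = (Real.sqrt (∑ j, (p j).im ^ 2)) ^ 2 := (Real.sq_sqrt h0).symm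
      _ = F0 ^ 2 := by rw [hpy]
    have hψr : ψ0 * r = F0 * m := by
      rw [hψ0def]; field_simp
    have hkey := key_ineq_s7 (r := r) (fr := F0) (m := m) (ψ := ψ0)
      (fun j => (p j).re) (fun j => (p j).im)
      (fun j => (v j).re) (fun j => (v j).im) hrpos hF0pos hx hy2
      (by exact ht1) (by exact ht2) hψr
    have hkey' : (1 + m ^ 2) * ((∑ j, (p j).re * (v j).re) ^ 2 + (∑ j, (p j).re * (v j).im) ^ 2)
        ≤ r ^ 2 * ((∑ j, (v j).re ^ 2) + (∑ j, (v j).im ^ 2)) := by exact hkey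
    refine ⟨r, hrI, ((∑ j, (v j).re ^ 2) + (∑ j, (v j).im ^ 2)
      - (1 + m ^ 2) * ((∑ j, (p j).re * (v j).re) ^ 2 + (∑ j, (p j).re * (v j).im) ^ 2) / r ^ 2)
        / 2, ?_, ?_⟩
    · have h' : (1 + m ^ 2) * ((∑ j, (p j).re * (v j).re) ^ 2
          + (∑ j, (p j).re * (v j).im) ^ 2) / r ^ 2
          ≤ (∑ j, (v j).re ^ 2) + (∑ j, (v j).im ^ 2) := by
        rw [div_le_iff₀ (by positivity)]
        linarith
      linarith
    · simp only [leviForm]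
      rw [hH v v, hH (Complex.I • v) (Complex.I • v), cI1, cI2, cI3, cv1, cv2]
      rw [show f r * deriv f r / r = ψ0 from (hψ0def).symm]
      have hχval : χ = (1 + m ^ 2) * (1 - ψ0) / (2 * r ^ 2) := by
        rw [eq_div_iff (by positivity)]
        linarith [hχr]
      rw [hχval]
      have hr0 : r ≠ 0 := hrpos.ne'
      clear_value r F0 m F2 ψ0 χ
      field_simp
      ring
  constructor
  · intro hcase p hp v hv
    obtain ⟨t, ht, B, hB0, hLB⟩ := KEY p hp v hv
    rw [hLB]
    have := hcase t ht
    exact mul_nonneg (by linarith) hB0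
  · intro hcase p hp v hv
    obtain ⟨t, ht, B, hB0, hLB⟩ := KEY p hp v hv
    rw [hLB]
    have := hcase t ht
    exact mul_nonpos_of_nonpos_of_nonneg (by linarith) hB0
end

section
/- Let t > 0, let f be a positive C² function on a neighborhood of t in (0,∞), and define θ on a neighborhood of t² by θ(s) = f(√s)² (so that θ(t²) = f(t)²). Then: (a) θ'(t²) < 1 if and only if f(t) f'(t)/t < 1; and (b) 2 t² θ(t²) θ''(t²) < (1 − θ'(t²)) ( t² θ'(t²)² + θ(t²) ) if and only if f(t) ( f''(t) + f'(t)³/t ) < 1. -/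
open Set

theorem stmt_8 (t : ℝ) (ht : 0 < t) (f : ℝ → ℝ) (V : Set ℝ) (hV : IsOpen V)
    (hVsub : V ⊆ Ioi (0 : ℝ)) (htV : t ∈ V)
    (hf : ContDiffOn ℝ 2 f V) (hfpos : ∀ s ∈ V, 0 < f s) :
    (deriv (fun s => f (Real.sqrt s) ^ 2) (t ^ 2) < 1 ↔ f t * deriv f t / t < 1) ∧
    (2 * t ^ 2 * (f t) ^ 2 * deriv (deriv (fun s => f (Real.sqrt s) ^ 2)) (t ^ 2) <
        (1 - deriv (fun s => f (Real.sqrt s) ^ 2) (t ^ 2)) *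
          (t ^ 2 * (deriv (fun s => f (Real.sqrt s) ^ 2) (t ^ 2)) ^ 2 + (f t) ^ 2)
      ↔ f t * (deriv (deriv f) t + (deriv f t) ^ 3 / t) < 1) := by
  have hst : Real.sqrt (t ^ 2) = t := Real.sqrt_sq ht.le
  have ht2 : (0:ℝ) < t ^ 2 := by positivity
  set U : Set ℝ := (Real.sqrt ⁻¹' V) ∩ Ioi 0 with hU
  have hUopen : IsOpen U :=
    (hV.preimage Real.continuous_sqrt).inter isOpen_Ioi
  have htU : t ^ 2 ∈ U := ⟨by simpa [hst] using htV, ht2⟩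
  have hf1 : ∀ x ∈ V, HasDerivAt f (deriv f x) x := fun x hx =>
    ((hf.differentiableOn (by norm_num)).differentiableAt (hV.mem_nhds hx)).hasDerivAt
  have hfd : ContDiffOn ℝ 1 (deriv f) V := hf.deriv_of_isOpen hV (by norm_num)
  have hf2 : ∀ x ∈ V, HasDerivAt (deriv f) (deriv (deriv f) x) x := fun x hx =>
    ((hfd.differentiableOn one_ne_zero).differentiableAt (hV.mem_nhds hx)).hasDerivAt
  -- first derivative of θ on U
  have hg : ∀ s ∈ U, HasDerivAt (fun s => f (Real.sqrt s) ^ 2)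
      (f (Real.sqrt s) * deriv f (Real.sqrt s) / Real.sqrt s) s := by
    intro s hs
    have hs0 : 0 < s := hs.2
    have hsq0 : Real.sqrt s ≠ 0 := (Real.sqrt_pos.mpr hs0).ne'
    have hsq : HasDerivAt Real.sqrt (1 / (2 * Real.sqrt s)) s :=
      Real.hasDerivAt_sqrt hs0.ne'
    have h1 : HasDerivAt (fun y => f (Real.sqrt y))
        (deriv f (Real.sqrt s) * (1 / (2 * Real.sqrt s))) s :=
      (hf1 _ hs.1).comp s hsq
    have h2 := h1.fun_pow 2
    refine h2.congr_deriv ?_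
    norm_num
    field_simp
  have hθ' : deriv (fun s => f (Real.sqrt s) ^ 2) (t ^ 2) = f t * deriv f t / t := by
    rw [(hg _ htU).deriv, hst]
  -- second derivative
  set a := f t with ha'
  set b := deriv f t with hb'
  set c := deriv (deriv f) t with hc'
  have ha : 0 < a := hfpos t htV
  have hC : HasDerivAt Real.sqrt (1 / (2 * t)) (t ^ 2) := by
    have := Real.hasDerivAt_sqrt ht2.ne'
    rwa [hst] at this
  have hA : HasDerivAt (fun s => f (Real.sqrt s)) (b * (1 / (2 * t))) (t ^ 2) := by
    have h0 : HasDerivAt f b (Real.sqrt (t ^ 2)) := by rw [hst]; exact hf1 t htV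
    exact h0.comp (t ^ 2) hC
  have hB : HasDerivAt (fun s => deriv f (Real.sqrt s)) (c * (1 / (2 * t))) (t ^ 2) := by
    have h0 : HasDerivAt (deriv f) c (Real.sqrt (t ^ 2)) := by rw [hst]; exact hf2 t htV
    exact h0.comp (t ^ 2) hC
  have hCne : Real.sqrt (t ^ 2) ≠ 0 := by rw [hst]; exact ht.ne'
  have hGd : HasDerivAt (fun s => f (Real.sqrt s) * deriv f (Real.sqrt s) / Real.sqrt s)
      (((b * (1 / (2 * t)) * deriv f (Real.sqrt (t ^ 2)) +
        f (Real.sqrt (t ^ 2)) * (c * (1 / (2 * t)))) * Real.sqrt (t ^ 2) -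
        f (Real.sqrt (t ^ 2)) * deriv f (Real.sqrt (t ^ 2)) * (1 / (2 * t))) /
        Real.sqrt (t ^ 2) ^ 2) (t ^ 2) := (hA.mul hB).div hC hCne
  have hG : deriv (fun s => f (Real.sqrt s) * deriv f (Real.sqrt s) / Real.sqrt s) (t ^ 2)
      = (b ^ 2 + a * c) / (2 * t ^ 2) - a * b / (2 * t ^ 3) := by
    rw [hGd.deriv, hst]
    field_simp
    ring
  have heq : deriv (fun s => f (Real.sqrt s) ^ 2) =ᶠ[nhds (t ^ 2)]
      (fun s => f (Real.sqrt s) * deriv f (Real.sqrt s) / Real.sqrt s) := by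
    filter_upwards [hUopen.mem_nhds htU] with s hs
    exact (hg s hs).deriv
  have hθ'' : deriv (deriv (fun s => f (Real.sqrt s) ^ 2)) (t ^ 2)
      = (b ^ 2 + a * c) / (2 * t ^ 2) - a * b / (2 * t ^ 3) := by
    rw [heq.deriv_eq, hG]
  rw [hθ', hθ'']
  constructor
  · exact Iff.rfl
  · have key : (1 - a * b / t) * (t ^ 2 * (a * b / t) ^ 2 + a ^ 2) -
        2 * t ^ 2 * a ^ 2 * ((b ^ 2 + a * c) / (2 * t ^ 2) - a * b / (2 * t ^ 3))
        = a ^ 2 * (1 - a * (c + b ^ 3 / t)) := by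
      field_simp
      ring
    constructor <;> intro h <;> nlinarith [key, mul_pos ha ha, sq_nonneg a]
end

section
/- Let θ be a C² function on an open interval J ⊂ (0,∞) with positive values and θ'(s) > 0 for all s ∈ J, and let τ = θ⁻¹ be its inverse function, defined on θ(J). Then for every s ∈ J, writing u = θ(s), the conditions [θ'(s) < 1 and 2 s θ(s) θ''(s) < (1 − θ'(s)) (s θ'(s)² + θ(s))] hold if and only if the conditions [τ'(u) > 1 and 2 u τ(u) τ''(u) > (1 − τ'(u)) (u τ'(u)² + τ(u))] hold. -/
open Set

theorem stmt_9 (a b : ℝ) (ha : 0 ≤ a) (θ τ : ℝ → ℝ)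
    (hθ : ContDiffOn ℝ 2 θ (Ioo a b))
    (hθpos : ∀ s ∈ Ioo a b, 0 < θ s)
    (hθ' : ∀ s ∈ Ioo a b, 0 < deriv θ s)
    (hinv : ∀ s ∈ Ioo a b, τ (θ s) = s)
    (hopen : IsOpen (θ '' Ioo a b))
    (hτ : ContDiffOn ℝ 2 τ (θ '' Ioo a b)) :
    ∀ s ∈ Ioo a b,
      ((deriv θ s < 1 ∧
          2 * s * θ s * deriv (deriv θ) s <
            (1 - deriv θ s) * (s * (deriv θ s) ^ 2 + θ s))
        ↔ (1 < deriv τ (θ s) ∧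
          (1 - deriv τ (θ s)) * (θ s * (deriv τ (θ s)) ^ 2 + τ (θ s)) <
            2 * θ s * τ (θ s) * deriv (deriv τ) (θ s))) := by
  intro s hs
  have hJ : IsOpen (Ioo a b) := isOpen_Ioo
  have hmem : Ioo a b ∈ nhds s := hJ.mem_nhds hs
  have hu : θ s ∈ θ '' Ioo a b := mem_image_of_mem θ hs
  have hU : θ '' Ioo a b ∈ nhds (θ s) := hopen.mem_nhds hu
  have hθdiff : ∀ x ∈ Ioo a b, HasDerivAt θ (deriv θ x) x := by
    intro x hx
    exact ((hθ.contDiffAt (hJ.mem_nhds hx)).differentiableAt (by norm_num)).hasDerivAt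
  have hθ'C : ContDiffOn ℝ 1 (deriv θ) (Ioo a b) :=
    hθ.deriv_of_isOpen hJ (by norm_num)
  have hθ''s : HasDerivAt (deriv θ) (deriv (deriv θ) s) s :=
    ((hθ'C.contDiffAt hmem).differentiableAt one_ne_zero).hasDerivAt
  have hτdiff : ∀ y ∈ θ '' Ioo a b, HasDerivAt τ (deriv τ y) y := by
    intro y hy
    exact ((hτ.contDiffAt (hopen.mem_nhds hy)).differentiableAt (by norm_num)).hasDerivAt
  have hτ'C : ContDiffOn ℝ 1 (deriv τ) (θ '' Ioo a b) :=
    hτ.deriv_of_isOpen hopen (by norm_num)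
  have hτ''u : HasDerivAt (deriv τ) (deriv (deriv τ) (θ s)) (θ s) :=
    ((hτ'C.contDiffAt hU).differentiableAt one_ne_zero).hasDerivAt
  -- first identity
  have key1 : ∀ x ∈ Ioo a b, deriv τ (θ x) * deriv θ x = 1 := by
    intro x hx
    have hcomp : HasDerivAt (fun y => τ (θ y)) (deriv τ (θ x) * deriv θ x) x :=
      (hτdiff _ (mem_image_of_mem θ hx)).comp x (hθdiff x hx)
    have hid : HasDerivAt (fun y => τ (θ y)) 1 x := by
      have he : (fun y => τ (θ y)) =ᶠ[nhds x] id := by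
        filter_upwards [hJ.mem_nhds hx] with y hy using hinv y hy
      exact (hasDerivAt_id x).congr_of_eventuallyEq he
    exact hcomp.unique hid
  -- second identity
  have hfun : HasDerivAt (fun x => deriv τ (θ x) * deriv θ x)
      (deriv (deriv τ) (θ s) * deriv θ s * deriv θ s + deriv τ (θ s) * deriv (deriv θ) s) s :=
    (hτ''u.comp s (hθdiff s hs)).mul hθ''s
  have hconst : HasDerivAt (fun x => deriv τ (θ x) * deriv θ x) 0 s := by
    have he : (fun x => deriv τ (θ x) * deriv θ x) =ᶠ[nhds s] fun _ => (1 : ℝ) := by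
      filter_upwards [hmem] with y hy using key1 y hy
    exact (hasDerivAt_const s (1 : ℝ)).congr_of_eventuallyEq he
  have key2 : deriv (deriv τ) (θ s) * deriv θ s * deriv θ s + deriv τ (θ s) * deriv (deriv θ) s
      = 0 := hfun.unique hconst
  -- algebra
  set p := deriv θ s with hpdef
  set q := deriv (deriv θ) s with hqdef
  set T := θ s with hTdef
  set r := deriv τ (θ s) with hrdef
  set r2 := deriv (deriv τ) (θ s) with hr2def
  have hp : 0 < p := hθ' s hs
  have hT : 0 < T := hθpos s hs
  have hspos : 0 < s := lt_of_le_of_lt ha hs.1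
  have h1 : r * p = 1 := key1 s hs
  have hts : τ (θ s) = s := hinv s hs
  rw [hts]
  have hp3 : 0 < p ^ 3 := by positivity
  have e3 : r2 * p ^ 3 + q = 0 := by linear_combination p * key2 - q * h1
  have hr : r = 1 / p := by rw [eq_div_iff hp.ne']; exact h1
  have hr2 : r2 = -q / p ^ 3 := by
    rw [eq_div_iff hp3.ne']; linarith
  have key : 2 * T * s * r2 - (1 - r) * (T * r ^ 2 + s)
      = ((1 - p) * (s * p ^ 2 + T) - 2 * s * T * q) / p ^ 3 := by
    rw [hr, hr2]; field_simp; ring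
  constructor
  · rintro ⟨h1', h2'⟩
    constructor
    · rw [hr]; exact (one_lt_div hp).mpr h1'
    · have hD : 0 < ((1 - p) * (s * p ^ 2 + T) - 2 * s * T * q) := by linarith
      have := div_pos hD hp3
      linarith [key ▸ this]
  · rintro ⟨h1', h2'⟩
    have hp1 : p < 1 := by rw [hr] at h1'; exact (one_lt_div hp).mp h1'
    refine ⟨hp1, ?_⟩
    have hpos : 0 < ((1 - p) * (s * p ^ 2 + T) - 2 * s * T * q) / p ^ 3 := by
      rw [← key]; linarith
    have hD : 0 < ((1 - p) * (s * p ^ 2 + T) - 2 * s * T * q) := by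
      have heq : ((1 - p) * (s * p ^ 2 + T) - 2 * s * T * q)
          = (((1 - p) * (s * p ^ 2 + T) - 2 * s * T * q) / p ^ 3) * p ^ 3 := by
        field_simp
      rw [heq]; exact mul_pos hpos hp3
    linarith
end

section
/- Let θ be a C² function on an open interval J ⊂ (0,∞) with positive values and θ'(s) < 0 for all s ∈ J, and let τ = θ⁻¹ be its inverse function, defined on θ(J). Then for every s ∈ J, writing u = θ(s), the conditions [θ'(s) < 1 and 2 s θ(s) θ''(s) < (1 − θ'(s)) (s θ'(s)² + θ(s))] hold if and only if the conditions [τ'(u) < 1 and 2 u τ(u) τ''(u) < (1 − τ'(u)) (u τ'(u)² + τ(u))] hold. -/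
open Set

private lemma aux_ineq (s u p q t1 t2 : ℝ) (hp : p < 0) (hpt : t1 * p = 1)
    (ht2 : t2 = -q * t1 ^ 3)
    (hA : 2 * s * u * q < (1 - p) * (s * p ^ 2 + u)) :
    2 * u * s * t2 < (1 - t1) * (u * t1 ^ 2 + s) := by
  have ht1 : t1 < 0 := by nlinarith
  have h3 : 0 < -t1 ^ 3 := by nlinarith [pow_pos (neg_pos.mpr ht1) 3]
  have hid : -t1 ^ 3 * ((1 - p) * (s * p ^ 2 + u)) = (1 - t1) * (u * t1 ^ 2 + s) := by
    linear_combination (s * (t1 ^ 2 * p ^ 2 + t1 * p + 1) - s * t1 * (1 + t1 * p) + u * t1 ^ 2) * hpt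
  calc 2 * u * s * t2 = -t1 ^ 3 * (2 * s * u * q) := by rw [ht2]; ring
    _ < -t1 ^ 3 * ((1 - p) * (s * p ^ 2 + u)) := by
        exact mul_lt_mul_of_pos_left hA h3
    _ = (1 - t1) * (u * t1 ^ 2 + s) := hid

theorem stmt_10 (a b : ℝ) (ha : 0 ≤ a) (θ τ : ℝ → ℝ)
    (hθ : ContDiffOn ℝ 2 θ (Ioo a b))
    (hθpos : ∀ s ∈ Ioo a b, 0 < θ s)
    (hθ' : ∀ s ∈ Ioo a b, deriv θ s < 0)
    (hinv : ∀ s ∈ Ioo a b, τ (θ s) = s)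
    (hopen : IsOpen (θ '' Ioo a b))
    (hτ : ContDiffOn ℝ 2 τ (θ '' Ioo a b)) :
    ∀ s ∈ Ioo a b,
      ((deriv θ s < 1 ∧
          2 * s * θ s * deriv (deriv θ) s <
            (1 - deriv θ s) * (s * (deriv θ s) ^ 2 + θ s))
        ↔ (deriv τ (θ s) < 1 ∧
          2 * θ s * τ (θ s) * deriv (deriv τ) (θ s) <
            (1 - deriv τ (θ s)) * (θ s * (deriv τ (θ s)) ^ 2 + τ (θ s)))) := by
  intro s hs
  have hso : IsOpen (Ioo a b) := isOpen_Ioo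
  have hθd : ∀ x ∈ Ioo a b, DifferentiableAt ℝ θ x := fun x hx =>
    (hθ.contDiffAt (hso.mem_nhds hx)).differentiableAt two_ne_zero
  have hτd : ∀ v ∈ θ '' Ioo a b, DifferentiableAt ℝ τ v := fun v hv =>
    (hτ.contDiffAt (hopen.mem_nhds hv)).differentiableAt two_ne_zero
  -- first derivative relation
  have key1 : ∀ x ∈ Ioo a b, deriv τ (θ x) * deriv θ x = 1 := by
    intro x hx
    have hθx := (hθd x hx).hasDerivAt
    have hτx := (hτd _ ⟨x, hx, rfl⟩).hasDerivAt
    have hc : HasDerivAt (τ ∘ θ) (deriv τ (θ x) * deriv θ x) x := hτx.comp x hθx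
    have heq : (τ ∘ θ) =ᶠ[nhds x] id :=
      Filter.eventuallyEq_of_mem (hso.mem_nhds hx) (fun y hy => hinv y hy)
    have hc' : HasDerivAt (id : ℝ → ℝ) (deriv τ (θ x) * deriv θ x) x :=
      hc.congr_of_eventuallyEq heq.symm
    exact hc'.unique (hasDerivAt_id x)
  -- second derivative relation
  have hθ'c : ContDiffOn ℝ 1 (deriv θ) (Ioo a b) := hθ.deriv_of_isOpen hso le_rfl
  have hτ'c : ContDiffOn ℝ 1 (deriv τ) (θ '' Ioo a b) := hτ.deriv_of_isOpen hopen le_rfl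
  have hθ'd : DifferentiableAt ℝ (deriv θ) s :=
    (hθ'c.contDiffAt (hso.mem_nhds hs)).differentiableAt one_ne_zero
  have hτ'd : DifferentiableAt ℝ (deriv τ) (θ s) :=
    (hτ'c.contDiffAt (hopen.mem_nhds ⟨s, hs, rfl⟩)).differentiableAt one_ne_zero
  have key2 : deriv (deriv τ) (θ s) * deriv θ s * deriv θ s
      + deriv τ (θ s) * deriv (deriv θ) s = 0 := by
    have hθs := (hθd s hs).hasDerivAt
    have hg : HasDerivAt (fun x => deriv τ (θ x)) (deriv (deriv τ) (θ s) * deriv θ s) s :=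
      (hτ'd.hasDerivAt).comp s hθs
    have hF : HasDerivAt (fun x => deriv τ (θ x) * deriv θ x)
        (deriv (deriv τ) (θ s) * deriv θ s * deriv θ s
          + deriv τ (θ s) * deriv (deriv θ) s) s :=
      hg.mul hθ'd.hasDerivAt
    have heq : (fun x => deriv τ (θ x) * deriv θ x) =ᶠ[nhds s] (fun _ => (1 : ℝ)) :=
      Filter.eventuallyEq_of_mem (hso.mem_nhds hs) (fun y hy => key1 y hy)
    have hF' : HasDerivAt (fun _ : ℝ => (1 : ℝ))
        (deriv (deriv τ) (θ s) * deriv θ s * deriv θ s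
          + deriv τ (θ s) * deriv (deriv θ) s) s := hF.congr_of_eventuallyEq heq.symm
    exact hF'.unique (hasDerivAt_const s 1)
  -- abbreviations
  set p := deriv θ s with hpdef
  set q := deriv (deriv θ) s with hqdef
  set t1 := deriv τ (θ s) with ht1def
  set t2 := deriv (deriv τ) (θ s) with ht2def
  have hp : p < 0 := hθ' s hs
  have hpt : t1 * p = 1 := key1 s hs
  have ht1 : t1 < 0 := by nlinarith
  have hτs : τ (θ s) = s := hinv s hs
  have ht2 : t2 = -q * t1 ^ 3 := by
    linear_combination t1 ^ 2 * key2 + (-(t2 * p * t1) - t2) * hpt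
  have hq : q = -t2 * p ^ 3 := by
    linear_combination p * key2 - q * hpt
  rw [hτs]
  constructor
  · rintro ⟨-, hA⟩
    exact ⟨by linarith, aux_ineq s (θ s) p q t1 t2 hp hpt ht2 hA⟩
  · rintro ⟨-, hB⟩
    refine ⟨by linarith, ?_⟩
    have := aux_ineq (θ s) s t1 t2 p q ht1 (by linear_combination hpt) hq hB
    linarith [this]
end

section
/- Let n ≥ 1, k ∈ {1,…,n}, write ζ = (z,w) ∈ ℂᵏ × ℂ^{n−k} with z = x+iy, w = u+iv, let A be a k×k real symmetric positive definite matrix and B an (n−k)×(n−k) real symmetric positive definite matrix, and set ρ(z,w) = ⟨Ay,y⟩ + ⟨Bv,v⟩ + |u|² − |x|². Then ρ is strongly plurisubharmonic on ℂⁿ (i.e. L_ρ(ζ; w) > 0 for every ζ ∈ ℂⁿ and every nonzero w ∈ ℂⁿ) if and only if A − I is positive definite, where I is the k×k identity matrix. -/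
set_option synthInstance.maxHeartbeats 1000000
set_option maxHeartbeats 1000000


open Complex Set

/-- `Q(y,w) = ⟨Ay,y⟩ + ⟨Bv,v⟩ + |u|²` for `ζ = (z,w) = (x+iy, u+iv) ∈ ℂᵏ × ℂ^{n-k}`. -/
def Qfun {k m : ℕ} (A : Matrix (Fin k) (Fin k) ℝ) (B : Matrix (Fin m) (Fin m) ℝ)
    (ζ : (Fin k → ℂ) × (Fin m → ℂ)) : ℝ :=
  (∑ i, ∑ j, A i j * (ζ.1 i).im * (ζ.1 j).im)
    + (∑ i, ∑ j, B i j * (ζ.2 i).im * (ζ.2 j).im)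
    + ∑ i, (ζ.2 i).re ^ 2

open Matrix

lemma secondDeriv_bilin {E : Type*} [NormedAddCommGroup E] [NormedSpace ℝ E]
    (b : E →L[ℝ] E →L[ℝ] ℝ) (p v w : E) :
    iteratedFDeriv ℝ 2 (fun x => b x x) p ![v, w] = b v w + b w v := by
  have hf : ∀ x : E, HasFDerivAt (fun y => b y y) ((b + b.flip) x) x := by
    intro x
    have hdiag : HasFDerivAt (fun y : E => (y, y))
        ((ContinuousLinearMap.id ℝ E).prod (ContinuousLinearMap.id ℝ E)) x :=
      ((ContinuousLinearMap.id ℝ E).prod (ContinuousLinearMap.id ℝ E)).hasFDerivAt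
    have houter : HasFDerivAt (fun q : E × E => b q.1 q.2)
        (b.isBoundedBilinearMap.deriv (x, x)) ((fun y : E => (y, y)) x) :=
      b.isBoundedBilinearMap.hasFDerivAt (x, x)
    have h1 := HasFDerivAt.comp (f := fun y : E => (y, y)) x houter hdiag
    convert h1 using 1
    · rfl
    · rfl
    · rfl
    · ext y
      simp [IsBoundedBilinearMap.deriv, ContinuousLinearMap.flip_apply]
  have hfd : (fderiv ℝ (fun y => b y y)) = fun x => (b + b.flip) x :=
    funext fun x => (hf x).fderiv
  rw [iteratedFDeriv_two_apply, hfd]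
  rw [ContinuousLinearMap.fderiv]
  simp [ContinuousLinearMap.flip_apply]

section aux
variable {k m : ℕ}

noncomputable def reZc (i : Fin k) : ((Fin k → ℂ) × (Fin m → ℂ)) →L[ℝ] ℝ :=
  Complex.reCLM.comp ((ContinuousLinearMap.proj i).comp
    (ContinuousLinearMap.fst ℝ (Fin k → ℂ) (Fin m → ℂ)))

noncomputable def imZc (i : Fin k) : ((Fin k → ℂ) × (Fin m → ℂ)) →L[ℝ] ℝ :=
  Complex.imCLM.comp ((ContinuousLinearMap.proj i).comp
    (ContinuousLinearMap.fst ℝ (Fin k → ℂ) (Fin m → ℂ)))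

noncomputable def reWc (i : Fin m) : ((Fin k → ℂ) × (Fin m → ℂ)) →L[ℝ] ℝ :=
  Complex.reCLM.comp ((ContinuousLinearMap.proj i).comp
    (ContinuousLinearMap.snd ℝ (Fin k → ℂ) (Fin m → ℂ)))

noncomputable def imWc (i : Fin m) : ((Fin k → ℂ) × (Fin m → ℂ)) →L[ℝ] ℝ :=
  Complex.imCLM.comp ((ContinuousLinearMap.proj i).comp
    (ContinuousLinearMap.snd ℝ (Fin k → ℂ) (Fin m → ℂ)))

noncomputable def bmat (A : Matrix (Fin k) (Fin k) ℝ) (B : Matrix (Fin m) (Fin m) ℝ) :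
    ((Fin k → ℂ) × (Fin m → ℂ)) →L[ℝ] ((Fin k → ℂ) × (Fin m → ℂ)) →L[ℝ] ℝ :=
  (∑ i, ∑ j, A i j • ((imZc i).smulRight (imZc j)))
    + (∑ i, ∑ j, B i j • ((imWc i).smulRight (imWc j)))
    + (∑ i, (reWc i).smulRight (reWc i))
    - ∑ i, (reZc i).smulRight (reZc i)

lemma bmat_apply (A : Matrix (Fin k) (Fin k) ℝ) (B : Matrix (Fin m) (Fin m) ℝ)
    (x y : (Fin k → ℂ) × (Fin m → ℂ)) :
    bmat A B x y = (∑ i, ∑ j, A i j * (x.1 i).im * (y.1 j).im)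
      + (∑ i, ∑ j, B i j * (x.2 i).im * (y.2 j).im)
      + (∑ i, (x.2 i).re * (y.2 i).re)
      - ∑ i, (x.1 i).re * (y.1 i).re := by
  simp [bmat, reZc, imZc, reWc, imWc, ContinuousLinearMap.sum_apply,
    ContinuousLinearMap.smul_apply, mul_assoc]

end aux

section aux2
variable {k : ℕ}

lemma dot_plain (M : Matrix (Fin k) (Fin k) ℝ) (x : Fin k → ℝ) :
    x ⬝ᵥ (M *ᵥ x) = ∑ i, ∑ j, M i j * x i * x j := by
  simp only [dotProduct, Matrix.mulVec, Finset.mul_sum]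
  exact Finset.sum_congr rfl fun i _ => Finset.sum_congr rfl fun j _ => by
    ring

lemma dot_sub_one (M : Matrix (Fin k) (Fin k) ℝ) (x : Fin k → ℝ) :
    x ⬝ᵥ ((M - 1) *ᵥ x) = (∑ i, ∑ j, M i j * x i * x j) - ∑ i, x i ^ 2 := by
  have h1 : (M - 1) *ᵥ x = M *ᵥ x - x := by
    rw [Matrix.sub_mulVec, Matrix.one_mulVec]
  rw [h1, dotProduct_sub, dot_plain]
  congr 1
  simp [dotProduct, sq]

end aux2

lemma levi_val {k m : ℕ} (A : Matrix (Fin k) (Fin k) ℝ) (B : Matrix (Fin m) (Fin m) ℝ)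
    (ζ v : (Fin k → ℂ) × (Fin m → ℂ)) :
    leviForm (fun ζ => Qfun A B ζ - ∑ i, (ζ.1 i).re ^ 2) ζ v =
    ((∑ i, ∑ j, A i j * (v.1 i).re * (v.1 j).re) - (∑ i, (v.1 i).re ^ 2)
      + ((∑ i, ∑ j, A i j * (v.1 i).im * (v.1 j).im) - ∑ i, (v.1 i).im ^ 2)
      + (∑ i, ∑ j, B i j * (v.2 i).re * (v.2 j).re) + (∑ i, (v.2 i).re ^ 2)
      + (∑ i, ∑ j, B i j * (v.2 i).im * (v.2 j).im) + ∑ i, (v.2 i).im ^ 2) / 2 := by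
  have hrho : (fun ζ : (Fin k → ℂ) × (Fin m → ℂ) => Qfun A B ζ - ∑ i, (ζ.1 i).re ^ 2)
      = fun x => bmat A B x x := by
    funext x
    rw [bmat_apply]
    simp only [Qfun, pow_two]
  rw [hrho]
  unfold leviForm
  rw [secondDeriv_bilin, secondDeriv_bilin, bmat_apply, bmat_apply]
  simp only [Prod.smul_fst, Prod.smul_snd, Pi.smul_apply, smul_eq_mul,
    Complex.mul_re, Complex.mul_im, Complex.I_re, Complex.I_im]
  simp only [zero_mul, one_mul, zero_add, zero_sub, neg_mul_neg, ← pow_two, neg_sq]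
  ring_nf

theorem stmt_16 {k m : ℕ} (hk : 1 ≤ k)
    (A : Matrix (Fin k) (Fin k) ℝ) (hAsymm : A.IsSymm) (hApd : A.PosDef)
    (B : Matrix (Fin m) (Fin m) ℝ) (hBsymm : B.IsSymm) (hBpd : B.PosDef) :
    (∀ ζ v : (Fin k → ℂ) × (Fin m → ℂ), v ≠ 0 →
      0 < leviForm (fun ζ => Qfun A B ζ - ∑ i, (ζ.1 i).re ^ 2) ζ v)
    ↔ (A - 1).PosDef := by
  constructor
  · intro h
    refine Matrix.PosDef.of_dotProduct_mulVec_pos ?_ ?_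
    · rw [Matrix.IsHermitian, Matrix.conjTranspose_eq_transpose_of_trivial,
        Matrix.transpose_sub, Matrix.transpose_one, hAsymm]
    · intro x hx
      set v : (Fin k → ℂ) × (Fin m → ℂ) := ((fun i => (x i : ℂ)), 0) with hv
      have hvne : v ≠ 0 := by
        intro hc
        apply hx
        funext i
        have := congrFun (congrArg Prod.fst hc) i
        simpa [hv] using this
      have hlt := h 0 v hvne
      rw [levi_val] at hlt
      rw [star_trivial, dot_sub_one]
      have hsimp : ∀ i : Fin k, (v.1 i).re = x i ∧ (v.1 i).im = 0 := fun i => by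
        simp [hv]
      simp only [hv, Complex.ofReal_re, Complex.ofReal_im, Prod.fst, Prod.snd] at hlt
      simp only [Complex.zero_re, Complex.zero_im, Pi.zero_apply, mul_zero, zero_mul,
        zero_pow, Finset.sum_const_zero, add_zero, sub_zero] at hlt
      norm_num at hlt
      linarith
  · intro hA1 ζ v hv
    rw [levi_val, ← dot_sub_one, ← dot_sub_one, ← dot_plain, ← dot_plain]
    have hAx : ∀ y : Fin k → ℝ, 0 ≤ y ⬝ᵥ ((A - 1) *ᵥ y) := fun y => by
      simpa using hA1.posSemidef.dotProduct_mulVec_nonneg y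
    have hAxs : ∀ y : Fin k → ℝ, y ≠ 0 → 0 < y ⬝ᵥ ((A - 1) *ᵥ y) := fun y hy => by
      simpa using hA1.dotProduct_mulVec_pos hy
    have hBx : ∀ y : Fin m → ℝ, 0 ≤ y ⬝ᵥ (B *ᵥ y) := fun y => by
      simpa using hBpd.posSemidef.dotProduct_mulVec_nonneg y
    have hBxs : ∀ y : Fin m → ℝ, y ≠ 0 → 0 < y ⬝ᵥ (B *ᵥ y) := fun y hy => by
      simpa using hBpd.dotProduct_mulVec_pos hy
    have hsq1 : (0:ℝ) ≤ ∑ i, (v.2 i).re ^ 2 := Finset.sum_nonneg fun i _ => sq_nonneg _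
    have hsq2 : (0:ℝ) ≤ ∑ i, (v.2 i).im ^ 2 := Finset.sum_nonneg fun i _ => sq_nonneg _
    have key : ((fun i => (v.1 i).re) ≠ (0 : Fin k → ℝ) ∨ (fun i => (v.1 i).im) ≠ (0 : Fin k → ℝ))
        ∨ ((fun i => (v.2 i).re) ≠ (0 : Fin m → ℝ) ∨ (fun i => (v.2 i).im) ≠ (0 : Fin m → ℝ)) := by
      by_contra hc
      push_neg at hc
      obtain ⟨⟨h1, h2⟩, h3, h4⟩ := hc
      apply hv
      refine Prod.ext ?_ ?_ <;> funext i <;> apply Complex.ext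
      · simpa using congrFun h1 i
      · simpa using congrFun h2 i
      · simpa using congrFun h3 i
      · simpa using congrFun h4 i
    apply div_pos _ (by norm_num)
    have n1 := hAx (fun i => (v.1 i).re)
    have n2 := hAx (fun i => (v.1 i).im)
    have n3 := hBx (fun i => (v.2 i).re)
    have n4 := hBx (fun i => (v.2 i).im)
    rcases key with (h5 | h5) | (h5 | h5)
    · have := hAxs _ h5; linarith
    · have := hAxs _ h5; linarith
    · have := hBxs _ h5; linarith
    · have := hBxs _ h5; linarith
end

section
/- Let n ≥ 1, k ∈ {1,…,n}, write ζ = (z,w) ∈ ℂᵏ × ℂ^{n−k} with z = x+iy, w = u+iv, let A be a k×k real symmetric matrix with A − I positive definite, B an (n−k)×(n−k) real symmetric positive definite matrix, and Q(y,w) = ⟨Ay,y⟩ + ⟨Bv,v⟩ + |u|². Let λ₁ > 1 denote the smallest eigenvalue of A. If h : [0,∞) → ℝ is a C^∞ function with h'(t) ≥ 0, h''(t) ≥ 0, h'(t) < λ₁ and 2 t h''(t) + h'(t) < λ₁ for all t ≥ 0, then τ(z,w) = Q(y,w) − h(|x|²) is strongly plurisubharmonic on ℂⁿ, i.e. L_τ(ζ;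 w) > 0 for every ζ ∈ ℂⁿ and every nonzero w ∈ ℂⁿ. -/
open Complex Set

/-- Extension of a function smooth on `Ici 0` to a `C²` function on `ℝ`. -/
lemma exists_c2_extension (h : ℝ → ℝ) (hh : ContDiffOn ℝ (⊤ : ℕ∞) h (Ici 0)) :
    ∃ H : ℝ → ℝ, ContDiff ℝ 2 H ∧ (∀ t, 0 ≤ t → H t = h t)
      ∧ (∀ t, 0 ≤ t → deriv H t = derivWithin h (Ici 0) t)
      ∧ (∀ t, 0 ≤ t → deriv (deriv H) t = derivWithin (derivWithin h (Ici 0)) (Ici 0) t) := by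
  have hu : UniqueDiffOn ℝ (Ici (0:ℝ)) := uniqueDiffOn_Ici 0
  set h1 : ℝ → ℝ := derivWithin h (Ici 0) with hh1
  set h2 : ℝ → ℝ := derivWithin h1 (Ici 0) with hh2
  have hh1d : ContDiffOn ℝ (⊤ : ℕ∞) h1 (Ici 0) := hh.derivWithin hu (by simp)
  have hh2d : ContDiffOn ℝ (⊤ : ℕ∞) h2 (Ici 0) := hh1d.derivWithin hu (by simp)
  set c1 : ℝ := h1 0 with hc1
  set c2 : ℝ := h2 0 with hc2
  set H : ℝ → ℝ := fun t => if 0 ≤ t then h t else h 0 + c1 * t + c2 * t ^ 2 / 2 with hH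
  set H1 : ℝ → ℝ := fun t => if 0 ≤ t then h1 t else c1 + c2 * t with hH1
  set H2 : ℝ → ℝ := fun t => if 0 ≤ t then h2 t else c2 with hH2
  -- H agrees with h on Ici 0, with the polynomial on Iic 0
  have hHh : EqOn H h (Ici 0) := fun t ht => if_pos ht
  have hHp : EqOn H (fun t => h 0 + c1 * t + c2 * t ^ 2 / 2) (Iic 0) := by
    intro t ht
    rcases (mem_Iic.1 ht).lt_or_eq with ht' | rfl
    · exact if_neg (not_le.2 ht')
    · simp [hH]
  have hH1h : EqOn H1 h1 (Ici 0) := fun t ht => if_pos ht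
  have hH1p : EqOn H1 (fun t => c1 + c2 * t) (Iic 0) := by
    intro t ht
    rcases (mem_Iic.1 ht).lt_or_eq with ht' | rfl
    · exact if_neg (not_le.2 ht')
    · simp [hH1, hc1]
  have hH2h : EqOn H2 h2 (Ici 0) := fun t ht => if_pos ht
  -- derivative of H is H1 everywhere
  have hd1 : ∀ t, HasDerivAt H (H1 t) t := by
    intro t
    rcases lt_trichotomy t 0 with ht | rfl | ht
    · have : HasDerivAt (fun t => h 0 + c1 * t + c2 * t ^ 2 / 2) (c1 + c2 * t) t := by
        have := ((hasDerivAt_id t).const_mul c1).const_add (h 0)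
        have h2' := ((hasDerivAt_pow 2 t).const_mul c2).div_const 2
        simpa [mul_comm, mul_assoc, mul_div_assoc, Pi.add_def] using (this.add h2')
      refine this.congr_of_eventuallyEq ?_ |>.congr_deriv ?_
      · filter_upwards [eventually_lt_nhds ht] with s hs using hHp hs.le
      · simp [hH1, not_le.2 ht]
    · -- at 0
      have hR : HasDerivWithinAt H c1 (Ici 0) 0 := by
        have : HasDerivWithinAt h c1 (Ici 0) 0 := by
          have hd := (hh.differentiableOn (by simp)) 0 (mem_Ici.2 le_rfl)
          simpa [hc1, hh1] using hd.hasDerivWithinAt.congr_deriv rfl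
        exact this.congr (fun s hs => hHh hs) (hHh (by norm_num))
      have hL : HasDerivWithinAt H c1 (Iic 0) 0 := by
        have : HasDerivAt (fun t => h 0 + c1 * t + c2 * t ^ 2 / 2) (c1 + c2 * 0) 0 := by
          have := ((hasDerivAt_id (0:ℝ)).const_mul c1).const_add (h 0)
          have h2' := ((hasDerivAt_pow 2 (0:ℝ)).const_mul c2).div_const 2
          simpa [mul_comm, mul_assoc, mul_div_assoc, Pi.add_def] using (this.add h2')
        simp only [mul_zero, add_zero] at this
        exact (this.hasDerivWithinAt).congr (fun s hs => hHp hs) (hHp (by norm_num))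
      have := (hR.union hL)
      rw [union_comm, Iic_union_Ici, hasDerivWithinAt_univ] at this
      simpa [hH1] using this
    · have hne : Ici (0:ℝ) ∈ nhds t := Ici_mem_nhds ht
      have hdh : DifferentiableAt ℝ h t :=
        ((hh t (le_of_lt ht)).differentiableWithinAt (by simp)).differentiableAt hne
      have : HasDerivAt h (h1 t) t := by
        rw [hh1, derivWithin_of_mem_nhds hne]
        exact hdh.hasDerivAt
      refine this.congr_of_eventuallyEq ?_ |>.congr_deriv (by simp [hH1, ht.le])
      filter_upwards [eventually_gt_nhds ht] with s hs using hHh hs.le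
  -- derivative of H1 is H2 everywhere
  have hd2 : ∀ t, HasDerivAt H1 (H2 t) t := by
    intro t
    rcases lt_trichotomy t 0 with ht | rfl | ht
    · have : HasDerivAt (fun t => c1 + c2 * t) c2 t := by
        simpa using ((hasDerivAt_id t).const_mul c2).const_add c1
      refine this.congr_of_eventuallyEq ?_ |>.congr_deriv ?_
      · filter_upwards [eventually_lt_nhds ht] with s hs using hH1p hs.le
      · simp [hH2, not_le.2 ht]
    · have hR : HasDerivWithinAt H1 c2 (Ici 0) 0 := by
        have : HasDerivWithinAt h1 c2 (Ici 0) 0 := by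
          have hd := (hh1d.differentiableOn (by simp)) 0 (mem_Ici.2 le_rfl)
          simpa [hc2, hh2] using hd.hasDerivWithinAt.congr_deriv rfl
        exact this.congr (fun s hs => hH1h hs) (hH1h (by norm_num))
      have hL : HasDerivWithinAt H1 c2 (Iic 0) 0 := by
        have : HasDerivAt (fun t => c1 + c2 * t) c2 0 := by
          simpa using ((hasDerivAt_id (0:ℝ)).const_mul c2).const_add c1
        exact (this.hasDerivWithinAt).congr (fun s hs => hH1p hs) (hH1p (by norm_num))
      have := (hR.union hL)
      rw [union_comm, Iic_union_Ici, hasDerivWithinAt_univ] at this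
      simpa [hH2] using this
    · have hne : Ici (0:ℝ) ∈ nhds t := Ici_mem_nhds ht
      have hdh : DifferentiableAt ℝ h1 t :=
        ((hh1d t (le_of_lt ht)).differentiableWithinAt (by simp)).differentiableAt hne
      have : HasDerivAt h1 (h2 t) t := by
        rw [hh2, derivWithin_of_mem_nhds hne]
        exact hdh.hasDerivAt
      refine this.congr_of_eventuallyEq ?_ |>.congr_deriv (by simp [hH2, ht.le])
      filter_upwards [eventually_gt_nhds ht] with s hs using hH1h hs.le
  -- continuity of H2
  have hH2p : EqOn H2 (fun _ => c2) (Iic 0) := by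
    intro t ht
    rcases (mem_Iic.1 ht).lt_or_eq with ht' | rfl
    · exact if_neg (not_le.2 ht')
    · simp [hH2, hc2]
  have hcont2 : Continuous H2 := by
    rw [continuous_iff_continuousAt]
    intro t
    rcases lt_trichotomy t 0 with ht | rfl | ht
    · refine (continuousAt_const (y := c2)).congr ?_
      filter_upwards [eventually_lt_nhds ht] with s hs using (hH2p hs.le).symm
    · have hR : ContinuousWithinAt H2 (Ici 0) 0 :=
        ((hh2d.continuousOn 0 (mem_Ici.2 le_rfl)).congr hH2h (hH2h (by norm_num)))
      have hL : ContinuousWithinAt H2 (Iic 0) 0 :=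
        (continuousWithinAt_const.congr hH2p (hH2p (by norm_num)))
      have := hR.union hL
      rwa [union_comm, Iic_union_Ici, continuousWithinAt_univ] at this
    · have hne : Ici (0:ℝ) ∈ nhds t := Ici_mem_nhds ht
      refine ((hh2d.continuousOn t ht.le).continuousAt hne).congr ?_
      filter_upwards [eventually_gt_nhds ht] with s hs using (hH2h hs.le).symm
  have hderivH : deriv H = H1 := funext fun t => (hd1 t).deriv
  have hderivH1 : deriv H1 = H2 := funext fun t => (hd2 t).deriv
  have hC2 : ContDiff ℝ 2 H := by
    rw [show (2 : WithTop ℕ∞) = 1 + 1 by norm_num, contDiff_succ_iff_deriv]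
    refine ⟨fun t => (hd1 t).differentiableAt, by simp, ?_⟩
    rw [hderivH, contDiff_one_iff_deriv]
    exact ⟨fun t => (hd2 t).differentiableAt, hderivH1 ▸ hcont2⟩
  exact ⟨H, hC2, fun t ht => hHh ht, fun t ht => hderivH ▸ hH1h ht,
    fun t ht => by rw [hderivH, hderivH1]; exact hH2h ht⟩

/-- The second derivative along a line computes the corresponding entry of the second
iterated Fréchet derivative. -/
lemma second_deriv_line {E : Type*} [NormedAddCommGroup E] [NormedSpace ℝ E] {f : E → ℝ}
    (hf : ContDiff ℝ 2 f) (p v : E) :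
    iteratedFDeriv ℝ 2 f p ![v, v] = deriv (deriv (fun t : ℝ => f (p + t • v))) 0 := by
  have hg : ∀ t : ℝ, HasDerivAt (fun s : ℝ => p + s • v) v t := fun t => by
    simpa using ((hasDerivAt_id t).smul_const v).const_add p
  have h1 : ∀ t : ℝ, deriv (fun s => f (p + s • v)) t = fderiv ℝ f (p + t • v) v := by
    intro t
    exact ((hf.differentiable (by norm_num) (p + t • v)).hasFDerivAt.comp_hasDerivAt t
      (hg t)).deriv
  have hfd : ContDiff ℝ 1 (fderiv ℝ f) := hf.fderiv_right (by norm_num)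
  have h2 : HasDerivAt (fun t : ℝ => fderiv ℝ f (p + t • v) v)
      (fderiv ℝ (fderiv ℝ f) p v v) 0 := by
    have hderiv : HasFDerivAt (fderiv ℝ f) (fderiv ℝ (fderiv ℝ f) p) (p + (0:ℝ) • v) := by
      simpa using (hfd.differentiable one_ne_zero p).hasFDerivAt
    have hcomp : HasDerivAt (fun t : ℝ => fderiv ℝ f (p + t • v))
        (fderiv ℝ (fderiv ℝ f) p v) 0 := hderiv.comp_hasDerivAt 0 (hg 0)
    simpa using hcomp.clm_apply (hasDerivAt_const 0 v)
  have : deriv (deriv (fun t : ℝ => f (p + t • v))) 0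
      = deriv (fun t : ℝ => fderiv ℝ f (p + t • v) v) 0 := by
    congr 1; funext t; exact h1 t
  rw [this, h2.deriv, iteratedFDeriv_two_apply]
  simp

/-- Second derivative at `0` of `t ↦ poly(t) - H(quadratic(t))`. -/
lemma deriv2_poly_sub_comp (H : ℝ → ℝ) (hH : ContDiff ℝ 2 H) (c0 c1 c2 d0 d1 d2 : ℝ) :
    deriv (deriv (fun t : ℝ => c0 + c1 * t + c2 * t ^ 2 - H (d0 + d1 * t + d2 * t ^ 2))) 0
      = 2 * c2 - (deriv (deriv H) d0 * d1 ^ 2 + deriv H d0 * (2 * d2)) := by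
  set ψ : ℝ → ℝ := fun t => d0 + d1 * t + d2 * t ^ 2 with hψdef
  have hψ : ∀ t : ℝ, HasDerivAt ψ (d1 + 2 * d2 * t) t := by
    intro t
    have := (((hasDerivAt_id t).const_mul d1).const_add d0).add ((hasDerivAt_pow 2 t).const_mul d2)
    refine (this.congr_deriv (by push_cast; ring)).congr_of_eventuallyEq (Filter.Eventually.of_forall fun s => ?_)
    rfl
  have hHd : Differentiable ℝ H := hH.differentiable (by norm_num)
  have hH' : ContDiff ℝ 1 (deriv H) := by
    have : ContDiff ℝ (1 + 1) H := by rwa [show (1 : WithTop ℕ∞) + 1 = 2 by norm_num]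
    exact ((contDiff_succ_iff_deriv.mp this).2.2)
  have hd1 : ∀ t : ℝ, HasDerivAt (fun t : ℝ => c0 + c1 * t + c2 * t ^ 2 - H (ψ t))
      (c1 + 2 * c2 * t - deriv H (ψ t) * (d1 + 2 * d2 * t)) t := by
    intro t
    have hpoly : HasDerivAt (fun t : ℝ => c0 + c1 * t + c2 * t ^ 2) (c1 + 2 * c2 * t) t := by
      have := (((hasDerivAt_id t).const_mul c1).const_add c0).add ((hasDerivAt_pow 2 t).const_mul c2)
      refine (this.congr_deriv (by push_cast; ring)).congr_of_eventuallyEq (Filter.Eventually.of_forall fun s => ?_)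
      rfl
    exact hpoly.sub (((hHd (ψ t)).hasDerivAt).comp t (hψ t))
  have hderiv1 : deriv (fun t : ℝ => c0 + c1 * t + c2 * t ^ 2 - H (ψ t))
      = fun t => c1 + 2 * c2 * t - deriv H (ψ t) * (d1 + 2 * d2 * t) :=
    funext fun t => (hd1 t).deriv
  have hu : HasDerivAt (fun t : ℝ => deriv H (ψ t)) (deriv (deriv H) d0 * d1) 0 := by
    have := ((hH'.differentiable one_ne_zero (ψ 0)).hasDerivAt).comp 0 (hψ 0)
    simpa [hψdef, Function.comp_def] using this
  have hv : HasDerivAt (fun t : ℝ => d1 + 2 * d2 * t) (2 * d2) 0 := by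
    simpa using ((hasDerivAt_id (0:ℝ)).const_mul (2 * d2)).const_add d1
  have hlin : HasDerivAt (fun t : ℝ => c1 + 2 * c2 * t) (2 * c2) 0 := by
    simpa using ((hasDerivAt_id (0:ℝ)).const_mul (2 * c2)).const_add c1
  have hd2 : HasDerivAt (fun t : ℝ => c1 + 2 * c2 * t - deriv H (ψ t) * (d1 + 2 * d2 * t))
      (2 * c2 - (deriv (deriv H) d0 * d1 ^ 2 + deriv H d0 * (2 * d2))) 0 := by
    have := hlin.sub (hu.mul hv)
    refine (this.congr_deriv ?_).congr_of_eventuallyEq (Filter.Eventually.of_forall fun s => rfl)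
    simp [hψdef]
    ring
  rw [show (fun t : ℝ => c0 + c1 * t + c2 * t ^ 2 - H (d0 + d1 * t + d2 * t ^ 2))
      = (fun t : ℝ => c0 + c1 * t + c2 * t ^ 2 - H (ψ t)) from rfl, hderiv1]
  exact hd2.deriv

/-- Expanding a real dot-product-like double sum. -/
lemma dot_expand' {k : ℕ} (A : Matrix (Fin k) (Fin k) ℝ) (c : Fin k → ℝ) :
    dotProduct c (A.mulVec c) = ∑ i, ∑ j, A i j * c i * c j := by
  simp only [dotProduct, Matrix.mulVec, Finset.mul_sum]
  exact Finset.sum_congr rfl fun i _ => Finset.sum_congr rfl fun j _ => by ring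

/-- Rayleigh-type lower bound for the quadratic form of a symmetric matrix in terms
of its least eigenvalue. -/
lemma rayleigh_lower {k : ℕ} (A : Matrix (Fin k) (Fin k) ℝ) (hAsymm : A.IsSymm) (lam₁ : ℝ)
    (hlam : IsLeast {r : ℝ | ∃ v : Fin k → ℝ, v ≠ 0 ∧ A.mulVec v = r • v} lam₁)
    (c : Fin k → ℝ) : lam₁ * ∑ i, c i ^ 2 ≤ ∑ i, ∑ j, A i j * c i * c j := by
  set M : Matrix (Fin k) (Fin k) ℝ := A - lam₁ • 1 with hM
  have hMh : M.IsHermitian := by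
    rw [Matrix.IsHermitian, Matrix.conjTranspose_eq_transpose_of_trivial, hM,
      Matrix.transpose_sub, hAsymm, Matrix.transpose_smul, Matrix.transpose_one]
  have heig : ∀ i, 0 ≤ hMh.eigenvalues i := by
    intro i
    have hw := hMh.mulVec_eigenvectorBasis i
    set w : Fin k → ℝ := ⇑(hMh.eigenvectorBasis i) with hwdef
    have hwne : w ≠ 0 := by
      intro h0
      have h1 : hMh.eigenvectorBasis i = 0 := by
        apply (WithLp.equiv 2 _).injective
        simpa [hwdef] using h0
      have h2 := hMh.eigenvectorBasis.toBasis.ne_zero i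
      rw [show hMh.eigenvectorBasis.toBasis i = hMh.eigenvectorBasis i from
        congrFun hMh.eigenvectorBasis.coe_toBasis i] at h2
      exact h2 h1
    have hAw : A.mulVec w = (hMh.eigenvalues i + lam₁) • w := by
      have : A.mulVec w - lam₁ • w = hMh.eigenvalues i • w := by
        rw [← hw, hM, Matrix.sub_mulVec, Matrix.smul_mulVec, Matrix.one_mulVec]
      rw [add_smul, ← this]; abel
    have : hMh.eigenvalues i + lam₁ ∈ {r : ℝ | ∃ v : Fin k → ℝ, v ≠ 0 ∧ A.mulVec v = r • v} :=
      ⟨w, hwne, hAw⟩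
    have := hlam.2 this
    linarith
  have hPSD : M.PosSemidef := hMh.posSemidef_iff_eigenvalues_nonneg.mpr heig
  have h0 := hPSD.dotProduct_mulVec_nonneg c
  rw [star_trivial, hM, Matrix.sub_mulVec, dotProduct_sub, Matrix.smul_mulVec,
    Matrix.one_mulVec, dotProduct_smul] at h0
  have e1 := dot_expand' A c
  have e2 : dotProduct c c = ∑ i, c i ^ 2 := by
    simp [dotProduct, sq]
  rw [e1, e2, smul_eq_mul] at h0
  linarith

/-- Expansion of a symmetric double sum along a line. -/
lemma quad_line {k : ℕ} (A : Matrix (Fin k) (Fin k) ℝ) (y α : Fin k → ℝ) (t : ℝ) :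
    ∑ i, ∑ j, A i j * (y i + t * α i) * (y j + t * α j)
      = (∑ i, ∑ j, A i j * y i * y j)
        + (∑ i, ∑ j, A i j * (y i * α j + α i * y j)) * t
        + (∑ i, ∑ j, A i j * α i * α j) * t ^ 2 := by
  rw [Finset.sum_mul, Finset.sum_mul, ← Finset.sum_add_distrib, ← Finset.sum_add_distrib]
  refine Finset.sum_congr rfl fun i _ => ?_
  rw [Finset.sum_mul, Finset.sum_mul, ← Finset.sum_add_distrib, ← Finset.sum_add_distrib]
  exact Finset.sum_congr rfl fun j _ => by ring

/-- Expansion of a sum of squares along a line. -/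
lemma sq_line {k : ℕ} (u β : Fin k → ℝ) (t : ℝ) :
    ∑ i, (u i + t * β i) ^ 2
      = (∑ i, u i ^ 2) + (∑ i, 2 * u i * β i) * t + (∑ i, β i ^ 2) * t ^ 2 := by
  rw [Finset.sum_mul, Finset.sum_mul, ← Finset.sum_add_distrib, ← Finset.sum_add_distrib]
  exact Finset.sum_congr rfl fun i _ => by ring

set_option maxHeartbeats 1000000 in
theorem stmt_17 {k m : ℕ} (hk : 1 ≤ k)
    (A : Matrix (Fin k) (Fin k) ℝ) (hAsymm : A.IsSymm) (hAI : (A - 1).PosDef)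
    (B : Matrix (Fin m) (Fin m) ℝ) (hBsymm : B.IsSymm) (hBpd : B.PosDef)
    (lam₁ : ℝ)
    (hlam : IsLeast {r : ℝ | ∃ v : Fin k → ℝ, v ≠ 0 ∧ A.mulVec v = r • v} lam₁)
    (hlam₁ : 1 < lam₁)
    (h : ℝ → ℝ) (hh : ContDiffOn ℝ (⊤ : ℕ∞) h (Ici 0))
    (hmono : ∀ t ∈ Ici (0 : ℝ), 0 ≤ derivWithin h (Ici 0) t)
    (hconv : ∀ t ∈ Ici (0 : ℝ), 0 ≤ derivWithin (derivWithin h (Ici 0)) (Ici 0) t)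
    (hlt : ∀ t ∈ Ici (0 : ℝ), derivWithin h (Ici 0) t < lam₁)
    (hlt2 : ∀ t ∈ Ici (0 : ℝ),
      2 * t * derivWithin (derivWithin h (Ici 0)) (Ici 0) t
        + derivWithin h (Ici 0) t < lam₁) :
    ∀ ζ v : (Fin k → ℂ) × (Fin m → ℂ), v ≠ 0 →
      0 < leviForm (fun ζ => Qfun A B ζ - h (∑ i, (ζ.1 i).re ^ 2)) ζ v := by
  classical
  obtain ⟨H, hHC2, hH0, hH1, hH2⟩ := exists_c2_extension h hh
  intro p v hv
  -- replace h by its C² extension H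
  have hfun : (fun ζ : (Fin k → ℂ) × (Fin m → ℂ) => Qfun A B ζ - h (∑ i, (ζ.1 i).re ^ 2))
      = (fun ζ => Qfun A B ζ - H (∑ i, (ζ.1 i).re ^ 2)) := by
    funext ζ
    rw [hH0 _ (Finset.sum_nonneg fun i _ => sq_nonneg _)]
  rw [hfun]
  set τ : (Fin k → ℂ) × (Fin m → ℂ) → ℝ :=
    fun ζ => Qfun A B ζ - H (∑ i, (ζ.1 i).re ^ 2) with hτdef
  -- τ is C²
  have him1 : ∀ i, ContDiff ℝ 2 (fun ζ : (Fin k → ℂ) × (Fin m → ℂ) => (ζ.1 i).im) := fun i =>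
    Complex.imCLM.contDiff.comp
      ((ContinuousLinearMap.proj (R := ℝ) (φ := fun _ : Fin k => ℂ) i).contDiff.comp contDiff_fst)
  have hre1 : ∀ i, ContDiff ℝ 2 (fun ζ : (Fin k → ℂ) × (Fin m → ℂ) => (ζ.1 i).re) := fun i =>
    Complex.reCLM.contDiff.comp
      ((ContinuousLinearMap.proj (R := ℝ) (φ := fun _ : Fin k => ℂ) i).contDiff.comp contDiff_fst)
  have him2 : ∀ i, ContDiff ℝ 2 (fun ζ : (Fin k → ℂ) × (Fin m → ℂ) => (ζ.2 i).im) := fun i =>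
    Complex.imCLM.contDiff.comp
      ((ContinuousLinearMap.proj (R := ℝ) (φ := fun _ : Fin m => ℂ) i).contDiff.comp contDiff_snd)
  have hre2 : ∀ i, ContDiff ℝ 2 (fun ζ : (Fin k → ℂ) × (Fin m → ℂ) => (ζ.2 i).re) := fun i =>
    Complex.reCLM.contDiff.comp
      ((ContinuousLinearMap.proj (R := ℝ) (φ := fun _ : Fin m => ℂ) i).contDiff.comp contDiff_snd)
  have hτ : ContDiff ℝ 2 τ := by
    apply ContDiff.sub
    · apply ContDiff.add
      apply ContDiff.add
      · exact ContDiff.sum fun i _ => ContDiff.sum fun j _ =>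
          (contDiff_const.mul (him1 i)).mul (him1 j)
      · exact ContDiff.sum fun i _ => ContDiff.sum fun j _ =>
          (contDiff_const.mul (him2 i)).mul (him2 j)
      · exact ContDiff.sum fun i _ => (hre2 i).pow 2
    · exact hHC2.comp (ContDiff.sum fun i _ => (hre1 i).pow 2)
  -- abbreviations
  set t0 : ℝ := ∑ i, (p.1 i).re ^ 2 with ht0def
  have ht0 : 0 ≤ t0 := Finset.sum_nonneg fun i _ => sq_nonneg _
  -- the key computation of the diagonal second derivative in an arbitrary direction
  have key : ∀ d : (Fin k → ℂ) × (Fin m → ℂ),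
      iteratedFDeriv ℝ 2 τ p ![d, d]
        = 2 * ((∑ i, ∑ j, A i j * (d.1 i).im * (d.1 j).im)
            + (∑ i, ∑ j, B i j * (d.2 i).im * (d.2 j).im) + ∑ i, (d.2 i).re ^ 2)
          - (deriv (deriv H) t0 * (∑ i, 2 * (p.1 i).re * (d.1 i).re) ^ 2
            + deriv H t0 * (2 * ∑ i, (d.1 i).re ^ 2)) := by
    intro d
    rw [second_deriv_line hτ p d]
    have hline : (fun t : ℝ => τ (p + t • d)) = fun t : ℝ =>
        (Qfun A B p
          + ((∑ i, ∑ j, A i j * ((p.1 i).im * (d.1 j).im + (d.1 i).im * (p.1 j).im))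
            + (∑ i, ∑ j, B i j * ((p.2 i).im * (d.2 j).im + (d.2 i).im * (p.2 j).im))
            + ∑ i, 2 * (p.2 i).re * (d.2 i).re) * t
          + ((∑ i, ∑ j, A i j * (d.1 i).im * (d.1 j).im)
            + (∑ i, ∑ j, B i j * (d.2 i).im * (d.2 j).im) + ∑ i, (d.2 i).re ^ 2) * t ^ 2)
        - H (t0 + (∑ i, 2 * (p.1 i).re * (d.1 i).re) * t + (∑ i, (d.1 i).re ^ 2) * t ^ 2) := by
      funext t
      have e1 : ∀ i, ((p + t • d).1 i).im = (p.1 i).im + t * (d.1 i).im := fun i => by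
        simp [Complex.add_im, Complex.smul_im]
      have e2 : ∀ i, ((p + t • d).2 i).im = (p.2 i).im + t * (d.2 i).im := fun i => by
        simp [Complex.add_im, Complex.smul_im]
      have e3 : ∀ i, ((p + t • d).2 i).re = (p.2 i).re + t * (d.2 i).re := fun i => by
        simp [Complex.add_re, Complex.smul_re]
      have e4 : ∀ i, ((p + t • d).1 i).re = (p.1 i).re + t * (d.1 i).re := fun i => by
        simp [Complex.add_re, Complex.smul_re]
      simp only [hτdef, Qfun, e1, e2, e3, e4, quad_line, sq_line, ht0def]
      ring
    rw [hline, deriv2_poly_sub_comp H hHC2]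
  -- compute the two diagonal entries
  rw [leviForm, key v, key (Complex.I • v)]
  -- simplify the components of I • v
  have f1 : ∀ i, ((Complex.I • v).1 i).im = (v.1 i).re := fun i => by
    simp [Complex.I_mul_im]
  have f2 : ∀ i, ((Complex.I • v).1 i).re = -(v.1 i).im := fun i => by
    simp [Complex.I_mul_re]
  have f3 : ∀ i, ((Complex.I • v).2 i).im = (v.2 i).re := fun i => by
    simp [Complex.I_mul_im]
  have f4 : ∀ i, ((Complex.I • v).2 i).re = -(v.2 i).im := fun i => by
    simp [Complex.I_mul_re]
  simp only [f1, f2, f3, f4]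
  -- now the inequality
  set qAI : ℝ := ∑ i, ∑ j, A i j * (v.1 i).im * (v.1 j).im with hqAI
  set qAR : ℝ := ∑ i, ∑ j, A i j * (v.1 i).re * (v.1 j).re with hqAR
  set qBI : ℝ := ∑ i, ∑ j, B i j * (v.2 i).im * (v.2 j).im with hqBI
  set qBR : ℝ := ∑ i, ∑ j, B i j * (v.2 i).re * (v.2 j).re with hqBR
  set SxR : ℝ := ∑ i, (v.1 i).re ^ 2 with hSxR
  set SxI : ℝ := ∑ i, (v.1 i).im ^ 2 with hSxI
  set SbR : ℝ := ∑ i, (v.2 i).re ^ 2 with hSbR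
  set SbI : ℝ := ∑ i, (v.2 i).im ^ 2 with hSbI
  have hSxRn : 0 ≤ SxR := Finset.sum_nonneg fun i _ => sq_nonneg _
  have hSxIn : 0 ≤ SxI := Finset.sum_nonneg fun i _ => sq_nonneg _
  have hSbRn : 0 ≤ SbR := Finset.sum_nonneg fun i _ => sq_nonneg _
  have hSbIn : 0 ≤ SbI := Finset.sum_nonneg fun i _ => sq_nonneg _
  have hA1 : lam₁ * SxI ≤ qAI := rayleigh_lower A hAsymm lam₁ hlam _
  have hA2 : lam₁ * SxR ≤ qAR := rayleigh_lower A hAsymm lam₁ hlam _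
  have hB1 : 0 ≤ qBI := by
    have := hBpd.posSemidef.dotProduct_mulVec_nonneg (fun i => (v.2 i).im)
    rwa [star_trivial, dot_expand'] at this
  have hB2 : 0 ≤ qBR := by
    have := hBpd.posSemidef.dotProduct_mulVec_nonneg (fun i => (v.2 i).re)
    rwa [star_trivial, dot_expand'] at this
  -- Cauchy-Schwarz bounds
  have hcs1 : (∑ i, 2 * (p.1 i).re * (v.1 i).re) ^ 2 ≤ 4 * t0 * SxR := by
    have := Finset.sum_mul_sq_le_sq_mul_sq Finset.univ (fun i => (p.1 i).re)
      (fun i => (v.1 i).re)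
    have e : (∑ i, 2 * (p.1 i).re * (v.1 i).re) = 2 * ∑ i, (p.1 i).re * (v.1 i).re := by
      rw [Finset.mul_sum]; exact Finset.sum_congr rfl fun i _ => by ring
    rw [e]
    calc (2 * ∑ i, (p.1 i).re * (v.1 i).re) ^ 2
        = 4 * (∑ i, (p.1 i).re * (v.1 i).re) ^ 2 := by ring
      _ ≤ 4 * (t0 * SxR) := by linarith
      _ = 4 * t0 * SxR := by ring
  have hcs2 : (∑ i, 2 * (p.1 i).re * -(v.1 i).im) ^ 2 ≤ 4 * t0 * SxI := by
    have := Finset.sum_mul_sq_le_sq_mul_sq Finset.univ (fun i => (p.1 i).re)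
      (fun i => -(v.1 i).im)
    have e : (∑ i, 2 * (p.1 i).re * -(v.1 i).im) = 2 * ∑ i, (p.1 i).re * -(v.1 i).im := by
      rw [Finset.mul_sum]; exact Finset.sum_congr rfl fun i _ => by ring
    have e2 : ∑ i, (-(v.1 i).im) ^ 2 = SxI := Finset.sum_congr rfl fun i _ => by ring
    rw [e]
    calc (2 * ∑ i, (p.1 i).re * -(v.1 i).im) ^ 2
        = 4 * (∑ i, (p.1 i).re * -(v.1 i).im) ^ 2 := by ring
      _ ≤ 4 * (t0 * SxI) := by rw [e2] at this; linarith
      _ = 4 * t0 * SxI := by ring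
  have e5 : ∑ i, (-(v.1 i).im) ^ 2 = SxI := Finset.sum_congr rfl fun i _ => by ring
  have e6 : ∑ i, (-(v.2 i).im) ^ 2 = SbI := Finset.sum_congr rfl fun i _ => by ring
  -- derivative facts
  have hd1 : deriv H t0 = derivWithin h (Ici 0) t0 := hH1 t0 ht0
  have hd2 : deriv (deriv H) t0 = derivWithin (derivWithin h (Ici 0)) (Ici 0) t0 := hH2 t0 ht0
  have hmono' : 0 ≤ deriv H t0 := hd1 ▸ hmono t0 ht0
  have hconv' : 0 ≤ deriv (deriv H) t0 := hd2 ▸ hconv t0 ht0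
  have hkey : 2 * t0 * deriv (deriv H) t0 + deriv H t0 < lam₁ := by
    rw [hd1, hd2]; exact hlt2 t0 ht0
  -- positivity of the total square sum
  have hS : 0 < SxR + SxI + SbR + SbI := by
    rcases lt_or_eq_of_le (by positivity : (0:ℝ) ≤ SxR + SxI + SbR + SbI) with hpos | heq
    · exact hpos
    · exfalso
      apply hv
      have hz : ∀ (w : Fin k → ℂ) (i : Fin k),
          True := fun _ _ => trivial
      have h1 : SxR = 0 ∧ SxI = 0 ∧ SbR = 0 ∧ SbI = 0 := by
        constructor
        · linarith
        constructor
        · linarith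
        constructor
        · linarith
        · linarith
      obtain ⟨z1, z2, z3, z4⟩ := h1
      have hzero1 : ∀ i, (v.1 i) = 0 := by
        intro i
        have hr : (v.1 i).re = 0 := by
          have := (Finset.sum_eq_zero_iff_of_nonneg (fun i _ => sq_nonneg ((v.1 i).re))).1
            z1.symm.symm i (Finset.mem_univ i)
          exact pow_eq_zero_iff (by norm_num) |>.1 this
        have hi : (v.1 i).im = 0 := by
          have := (Finset.sum_eq_zero_iff_of_nonneg (fun i _ => sq_nonneg ((v.1 i).im))).1
            z2.symm.symm i (Finset.mem_univ i)
          exact pow_eq_zero_iff (by norm_num) |>.1 this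
        exact Complex.ext hr hi
      have hzero2 : ∀ i, (v.2 i) = 0 := by
        intro i
        have hr : (v.2 i).re = 0 := by
          have := (Finset.sum_eq_zero_iff_of_nonneg (fun i _ => sq_nonneg ((v.2 i).re))).1
            z3.symm.symm i (Finset.mem_univ i)
          exact pow_eq_zero_iff (by norm_num) |>.1 this
        have hi : (v.2 i).im = 0 := by
          have := (Finset.sum_eq_zero_iff_of_nonneg (fun i _ => sq_nonneg ((v.2 i).im))).1
            z4.symm.symm i (Finset.mem_univ i)
          exact pow_eq_zero_iff (by norm_num) |>.1 this
        exact Complex.ext hr hi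
      exact Prod.ext (funext hzero1) (funext hzero2)
  rw [e5, e6]
  -- final arithmetic
  set h1' : ℝ := deriv H t0
  set h2' : ℝ := deriv (deriv H) t0
  rcases eq_or_lt_of_le (by positivity : (0:ℝ) ≤ SxR + SxI) with hx0 | hxpos
  · -- a = 0 : the b part carries the positivity
    have hxr : SxR = 0 := by linarith
    have hxi : SxI = 0 := by linarith
    have hb : 0 < SbR + SbI := by
      have := hS
      rw [hxr, hxi] at this
      linarith
    have hz1 : (∑ i, 2 * (p.1 i).re * (v.1 i).re) ^ 2 = 0 := by
      have h1 := hcs1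
      rw [hxr] at h1
      nlinarith [sq_nonneg (∑ i, 2 * (p.1 i).re * (v.1 i).re)]
    have hz2 : (∑ i, 2 * (p.1 i).re * -(v.1 i).im) ^ 2 = 0 := by
      have h1 := hcs2
      rw [hxi] at h1
      nlinarith [sq_nonneg (∑ i, 2 * (p.1 i).re * -(v.1 i).im)]
    rw [hz1, hz2, hxr, hxi]
    have hqAI' : 0 ≤ qAI := by nlinarith
    have hqAR' : 0 ≤ qAR := by nlinarith
    nlinarith
  · -- a ≠ 0 : the A part carries the positivity
    have hgap : 0 < lam₁ - (2 * t0 * h2' + h1') := by linarith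
    nlinarith [mul_nonneg hconv' (mul_nonneg (mul_nonneg (by norm_num : (0:ℝ) ≤ 4) ht0) hSxRn),
      mul_nonneg hconv' (mul_nonneg (mul_nonneg (by norm_num : (0:ℝ) ≤ 4) ht0) hSxIn),
      mul_pos hgap hxpos,
      mul_nonneg hmono' hSxRn, mul_nonneg hmono' hSxIn,
      mul_le_mul_of_nonneg_left hcs1 hconv',
      mul_le_mul_of_nonneg_left hcs2 hconv']
end
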